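/- arXiv:math/0307164 — 5 statements merged into one kernel-verified Lean document; each statement's English description precedes it below -/
import Mathlib

section
/- Let σ = (Z,P) be a stability condition on a triangulated category D. Let T : ℝ² → ℝ² be an orientation-preserving linear isomorphism (identifying ℂ with ℝ²) and f : ℝ → ℝ an increasing map with f(φ+1) = f(φ)+1, such that for every φ ∈ ℝ the map T carries the ray ℝ_{>0}·exp(iπφ) onto the ray ℝ_{>0}·exp(iπ f(φ)). Define Z' = T^{-1} ∘ Z and P'(φ) = P(f(φ)) for all φ ∈ ℝ. Then σ' = (Z',P') is a stability condition on D, and the semistable objects of σ' are exactly the semistable objects of σ (only their phases are relabelled). -/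
/-!
STATEMENT 2: the right action of (a lift of an element of) GL⁺(2,ℝ) on stability conditions.
-/

open CategoryTheory CategoryTheory.Limits CategoryTheory.Pretriangulated

universe v u

variable (C : Type u) [Category.{v} C] [HasZeroObject C] [HasShift C ℤ]
  [Preadditive C] [∀ n : ℤ, (CategoryTheory.shiftFunctor C n).Additive] [Pretriangulated C]

/-- A Harder–Narasimhan decomposition of an object `E` with respect to a collection of
full subcategories `P φ` (`φ : ℝ`). -/
structure HNFiltration (P : ℝ → Set C) (E : C) where
  n : ℕ
  phase : Fin n → ℝ
  phase_strictAnti : StrictAnti phase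
  obj : Fin (n + 1) → C
  obj_zero : IsZero (obj 0)
  obj_last : obj (Fin.last n) = E
  fac : Fin n → C
  fac_mem : ∀ j, fac j ∈ P (phase j)
  fac_nonzero : ∀ j, ¬ IsZero (fac j)
  triangle : ∀ j : Fin n, ∃ (f : obj j.castSucc ⟶ obj j.succ) (g : obj j.succ ⟶ fac j)
      (h : fac j ⟶ (obj j.castSucc)⟦(1 : ℤ)⟧), Triangle.mk f g h ∈ distTriang C

/-- A stability condition `σ = (Z, P)` on a triangulated category `C`. -/
structure StabilityCondition where
  Z : C → ℂ
  P : ℝ → Set C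
  additive : ∀ T : Triangle C, (T ∈ distTriang C) → Z T.obj₂ = Z T.obj₁ + Z T.obj₃
  P_iso : ∀ (φ : ℝ) (A B : C), (A ≅ B) → A ∈ P φ → B ∈ P φ
  P_zero : ∀ (φ : ℝ) (A : C), IsZero A → A ∈ P φ
  central : ∀ (φ : ℝ) (E : C), E ∈ P φ → ¬ IsZero E →
      ∃ m : ℝ, 0 < m ∧ Z E = m * Complex.exp (Real.pi * φ * Complex.I)
  shift : ∀ (φ : ℝ) (E : C), E ∈ P (φ + 1) ↔ E⟦(-1 : ℤ)⟧ ∈ P φ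
  hom_zero : ∀ (φ₁ φ₂ : ℝ), φ₂ < φ₁ → ∀ (A B : C), A ∈ P φ₁ → B ∈ P φ₂ →
      ∀ f : A ⟶ B, f = 0
  HN : ∀ E : C, ¬ IsZero E → Nonempty (HNFiltration C P E)


/-- A nonzero object is semistable in `σ` if it lies in `P φ` for some phase `φ`. -/
def StabilityCondition.IsSemistable (σ : StabilityCondition C) (E : C) : Prop :=
  ¬ IsZero E ∧ ∃ φ : ℝ, E ∈ σ.P φ

lemma ray_eq {a b c : ℝ} (hc : 0 < c)
    (h : Complex.exp (Real.pi * a * Complex.I) = c * Complex.exp (Real.pi * b * Complex.I)) :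
    ∃ n : ℤ, a = b + 2 * n := by
  have habs1 : ‖(Complex.exp (Real.pi * a * Complex.I))‖ = 1 := by
    rw [show ((Real.pi : ℂ) * a) = ((Real.pi * a : ℝ) : ℂ) by push_cast; ring]
    exact Complex.norm_exp_ofReal_mul_I _
  have habs2 : ‖(Complex.exp (Real.pi * b * Complex.I))‖ = 1 := by
    rw [show ((Real.pi : ℂ) * b) = ((Real.pi * b : ℝ) : ℂ) by push_cast; ring]
    exact Complex.norm_exp_ofReal_mul_I _
  have hc1 : c = 1 := by
    have h2 := congrArg (‖·‖) h
    rw [habs1, norm_mul, habs2, Complex.norm_real, Real.norm_eq_abs, abs_of_pos hc, mul_one] at h2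
    linarith
  subst hc1
  rw [Complex.ofReal_one, one_mul, Complex.exp_eq_exp_iff_exists_int] at h
  obtain ⟨n, hn⟩ := h
  refine ⟨n, ?_⟩
  have him := congrArg Complex.im hn
  simp [Complex.mul_im, Complex.mul_re] at him
  have hπ := Real.pi_pos
  have h3 : Real.pi * a = Real.pi * b + n * (2 * Real.pi) := by
    convert him using 2
  nlinarith [h3]

lemma f_add_int {f : ℝ → ℝ} (hf1 : ∀ φ : ℝ, f (φ + 1) = f φ + 1) :
    ∀ (n : ℤ) (φ : ℝ), f (φ + n) = f φ + n := by
  intro n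
  induction n using Int.induction_on with
  | zero => simp
  | succ k ih =>
      intro φ
      have h1 : (φ + ((k : ℤ) + 1 : ℤ) : ℝ) = (φ + (k : ℤ)) + 1 := by push_cast; ring
      rw [h1, hf1, ih]; push_cast; ring
  | pred k ih =>
      intro φ
      have h1 := hf1 (φ + (-(k : ℤ) - 1 : ℤ))
      have h2 : (φ + (-(k : ℤ) - 1 : ℤ) + 1 : ℝ) = φ + (-(k : ℤ) : ℤ) := by push_cast; ring
      rw [h2, ih] at h1
      push_cast at h1 ⊢
      linarith

/-- Let `σ = (Z,P)` be a stability condition, `T : ℝ² → ℝ²` (identified with `ℂ → ℂ`)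
an orientation-preserving ℝ-linear isomorphism and `f : ℝ → ℝ` an increasing map with
`f(φ+1) = f(φ)+1` carrying the ray `ℝ_{>0}·exp(iπφ)` onto the ray `ℝ_{>0}·exp(iπ f(φ))`
for every `φ`. Then `(T⁻¹ ∘ Z, P ∘ f)` is a stability condition, with the same
semistable objects as `σ`. -/
theorem stabilityCondition_of_tildeGL (σ : StabilityCondition C)
    (T : ℂ →ₗ[ℝ] ℂ) (hTbij : Function.Bijective T) (hTor : 0 < LinearMap.det T)
    (f : ℝ → ℝ) (hf : Monotone f) (hf1 : ∀ φ : ℝ, f (φ + 1) = f φ + 1)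
    (hTf : ∀ φ : ℝ, ∃ s : ℝ, 0 < s ∧
      T (Complex.exp (Real.pi * φ * Complex.I)) =
        s * Complex.exp (Real.pi * (f φ) * Complex.I)) :
    ∃ τ : StabilityCondition C,
      (∀ E : C, T (τ.Z E) = σ.Z E) ∧
      (∀ φ : ℝ, τ.P φ = σ.P (f φ)) ∧
      (∀ E : C, τ.IsSemistable C E ↔ σ.IsSemistable C E) := by
  -- f is strictly monotone
  have hstrict : StrictMono f := by
    intro x y hxy
    rcases lt_or_eq_of_le (hf hxy.le) with h | h
    · exact h
    exfalso
    have hyx1 : y < x + 1 := by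
      by_contra hcon
      push_neg at hcon
      have h2 := hf hcon
      rw [hf1] at h2
      rw [← h] at h2
      linarith
    obtain ⟨s₁, hs₁, hT₁⟩ := hTf x
    obtain ⟨s₂, hs₂, hT₂⟩ := hTf y
    have hs₁' : (s₁ : ℂ) ≠ 0 := by exact_mod_cast hs₁.ne'
    have key : Complex.exp (Real.pi * y * Complex.I)
        = ((s₂ / s₁ : ℝ) : ℂ) * Complex.exp (Real.pi * x * Complex.I) := by
      apply hTbij.1
      rw [show ((s₂ / s₁ : ℝ) : ℂ) * Complex.exp (Real.pi * x * Complex.I)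
          = (s₂ / s₁ : ℝ) • Complex.exp (Real.pi * x * Complex.I) from
        Complex.real_smul.symm, map_smul, hT₁, hT₂, ← h, Complex.real_smul]
      push_cast
      field_simp
    obtain ⟨n, hn⟩ := ray_eq (div_pos hs₂ hs₁) key
    have hcase : (1 : ℤ) ≤ n ∨ n ≤ 0 := by omega
    rcases hcase with hc | hc
    · have : (1 : ℝ) ≤ n := by exact_mod_cast hc
      linarith
    · have : (n : ℝ) ≤ 0 := by exact_mod_cast hc
      linarith
  -- f is surjective
  have hfsur : Function.Surjective f := by
    intro ψ
    obtain ⟨w, hw⟩ := hTbij.2 (Complex.exp (Real.pi * ψ * Complex.I))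
    have hw0 : w ≠ 0 := by
      rintro rfl
      rw [map_zero] at hw
      exact Complex.exp_ne_zero _ hw.symm
    have hπ0 : (Real.pi : ℝ) ≠ 0 := Real.pi_ne_zero
    obtain ⟨r, φ, hrpos, hwpolar⟩ : ∃ (r φ : ℝ), 0 < r ∧
        w = (r : ℂ) * Complex.exp (Real.pi * (φ : ℂ) * Complex.I) := by
      refine ⟨‖w‖, w.arg / Real.pi, norm_pos_iff.mpr hw0, ?_⟩
      rw [show ((Real.pi : ℂ) * ((w.arg / Real.pi : ℝ) : ℂ)) = ((w.arg : ℝ) : ℂ) by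
        push_cast
        rw [mul_comm, div_mul_cancel₀ _ (Complex.ofReal_ne_zero.mpr hπ0)]]
      exact (Complex.norm_mul_exp_arg_mul_I w).symm
    obtain ⟨s, hs, hT⟩ := hTf φ
    have key : Complex.exp (Real.pi * ψ * Complex.I)
        = ((r * s : ℝ) : ℂ) * Complex.exp (Real.pi * (f φ) * Complex.I) := by
      rw [← hw, hwpolar,
        show (r : ℂ) * Complex.exp (Real.pi * (φ : ℂ) * Complex.I)
          = (r : ℝ) • Complex.exp (Real.pi * (φ : ℂ) * Complex.I) from
        Complex.real_smul.symm, map_smul, hT, Complex.real_smul]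
      push_cast
      ring
    obtain ⟨n, hn⟩ := ray_eq (mul_pos hrpos hs) key
    refine ⟨φ + (2 * n : ℤ), ?_⟩
    rw [f_add_int hf1]
    push_cast
    linarith
  -- the inverse of f
  set g : ℝ → ℝ := Function.surjInv hfsur with hg
  have hfg : ∀ ψ : ℝ, f (g ψ) = ψ := fun ψ => Function.surjInv_eq hfsur ψ
  -- the inverse linear equiv
  set e : ℂ ≃ₗ[ℝ] ℂ := LinearEquiv.ofBijective T hTbij with he
  have heT : ∀ z : ℂ, e z = T z := fun z => rfl
  refine ⟨{
    Z := fun E => e.symm (σ.Z E)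
    P := fun φ => σ.P (f φ)
    additive := by
      intro Tr hTr
      rw [σ.additive Tr hTr, map_add]
    P_iso := fun φ A B i hA => σ.P_iso (f φ) A B i hA
    P_zero := fun φ A hA => σ.P_zero (f φ) A hA
    central := by
      intro φ E hE hEnz
      obtain ⟨m, hm, hZ⟩ := σ.central (f φ) E hE hEnz
      obtain ⟨s, hs, hT⟩ := hTf φ
      have hs' : (s : ℂ) ≠ 0 := by exact_mod_cast hs.ne'
      refine ⟨m / s, div_pos hm hs, ?_⟩
      rw [LinearEquiv.symm_apply_eq]
      rw [show ((m / s : ℝ) : ℂ) * Complex.exp (Real.pi * φ * Complex.I)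
          = (m / s : ℝ) • Complex.exp (Real.pi * φ * Complex.I) from
        Complex.real_smul.symm, map_smul, heT, hT, hZ, Complex.real_smul]
      push_cast
      field_simp
    shift := by
      intro φ E
      show E ∈ σ.P (f (φ + 1)) ↔ (E⟦(-1 : ℤ)⟧ ∈ σ.P (f φ))
      rw [hf1]
      exact σ.shift (f φ) E
    hom_zero := fun φ₁ φ₂ h A B hA hB => σ.hom_zero (f φ₁) (f φ₂) (hstrict h) A B hA hB
    HN := by
      intro E hE
      obtain ⟨F⟩ := σ.HN E hE
      exact ⟨{
        n := F.n
        phase := fun j => g (F.phase j)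
        phase_strictAnti := by
          intro i j hij
          by_contra hle
          push_neg at hle
          have := hf hle
          rw [hfg, hfg] at this
          exact absurd (F.phase_strictAnti hij) (not_lt.2 this)
        obj := F.obj
        obj_zero := F.obj_zero
        obj_last := F.obj_last
        fac := F.fac
        fac_mem := fun j => by
          show F.fac j ∈ σ.P (f (g (F.phase j)))
          rw [hfg]
          exact F.fac_mem j
        fac_nonzero := F.fac_nonzero
        triangle := F.triangle }⟩ }, ?_, ?_, ?_⟩
  · intro E
    show T (e.symm (σ.Z E)) = σ.Z E
    exact e.apply_symm_apply (σ.Z E)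
  · intro φ
    rfl
  · intro E
    constructor
    · rintro ⟨h1, φ, h2⟩
      exact ⟨h1, f φ, h2⟩
    · rintro ⟨h1, ψ, h2⟩
      refine ⟨h1, g ψ, ?_⟩
      show E ∈ σ.P (f (g ψ))
      rw [hfg]
      exact h2
end

section
/- Let D be a triangulated category. (1) A bounded t-structure on D is determined by its heart: two bounded t-structures with the same heart coincide. (2) A full additive subcategory A ⊆ D is the heart of a bounded t-structure on D if and only if both of the following hold: (a) if A and B are objects of A then Hom_D(A, B[k]) = 0 for all k < 0; (b) for every nonzero object E ∈ D there are integers m < n and a collection of distinguished triangles E_{i-1} → E_i → A_i → E_{i-1}[1] for m < i ≤ n, with E_m = 0, E_n = E, and A_i[i] ∈ A for all i. -/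
/-!
STATEMENT 3: a bounded t-structure is determined by its heart, and a characterization
of the full additive subcategories which are hearts of bounded t-structures.
-/

open CategoryTheory CategoryTheory.Limits CategoryTheory.Pretriangulated
open CategoryTheory.Triangulated
open ZeroObject
set_option linter.unusedSectionVars false
set_option linter.unusedTactic false
set_option linter.unreachableTactic false

universe v u

variable (C : Type u) [Category.{v} C] [HasZeroObject C] [HasShift C ℤ]
  [Preadditive C] [∀ n : ℤ, (CategoryTheory.shiftFunctor C n).Additive] [Pretriangulated C]

/-- A t-structure `(D^{≤0}, D^{≥0})` is bounded if every object lies in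
`D^{≤n} ∩ D^{≥m}` for some integers `m ≤ n`. -/
def TStructureIsBounded (t : TStructure C) : Prop :=
  ∀ X : C, ∃ m n : ℤ, t.le n X ∧ t.ge m X

/-- The heart `D^{≤0} ∩ D^{≥0}` of a t-structure, as a predicate on objects. -/
def heartP (t : TStructure C) : C → Prop := fun X => t.le 0 X ∧ t.ge 0 X

/-- Condition (b) of Lemma 3.2: `E` admits a finite tower of distinguished triangles
`E_{i-1} → E_i → A_i → E_{i-1}[1]` (for `m < i ≤ n`, reindexed by `j = i - m - 1 < k = n - m`)
with `E_m = 0`, `E_n = E` and `A_i[i] ∈ 𝒜` for all `i`. -/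
def HasHeartFiltration (𝒜 : C → Prop) (E : C) : Prop :=
  ∃ (m : ℤ) (k : ℕ), 0 < k ∧ ∃ (obj : Fin (k + 1) → C) (fac : Fin k → C),
    IsZero (obj 0) ∧ obj (Fin.last k) = E ∧
    (∀ j : Fin k, ∃ (f : obj j.castSucc ⟶ obj j.succ) (g : obj j.succ ⟶ fac j)
      (h : fac j ⟶ (obj j.castSucc)⟦(1 : ℤ)⟧), Triangle.mk f g h ∈ distTriang C) ∧
    (∀ j : Fin k, 𝒜 ((fac j)⟦(m + (j : ℕ) + 1 : ℤ)⟧))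

section Aux
variable {C}

/-- Condition (a). -/
def CondA (𝒜 : C → Prop) : Prop :=
  ∀ A B : C, 𝒜 A → 𝒜 B → ∀ k : ℤ, k < 0 → ∀ f : A ⟶ B⟦k⟧, f = 0

/-- Closure under isomorphisms, as a plain statement. -/
def CondIso (𝒜 : C → Prop) : Prop := ∀ X Y : C, (X ≅ Y) → 𝒜 X → 𝒜 Y

/-- An ℕ-indexed tower of distinguished triangles with factors in shifts of `𝒜`. -/
def GoodTower (𝒜 : C → Prop) (m : ℤ) (k : ℕ) (obj fac : ℕ → C) (E : C) : Prop :=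
  IsZero (obj 0) ∧ Nonempty (obj k ≅ E) ∧
    (∀ j, j < k → ∃ (f : obj j ⟶ obj (j + 1)) (g : obj (j + 1) ⟶ fac j)
      (h : fac j ⟶ (obj j)⟦(1 : ℤ)⟧), Triangle.mk f g h ∈ distTriang C) ∧
    (∀ j, j < k → 𝒜 ((fac j)⟦(m + j + 1 : ℤ)⟧))

lemma GoodTower.mono {𝒜 ℬ : C → Prop} (h : ∀ V, 𝒜 V → ℬ V) {m k obj fac E}
    (hT : GoodTower 𝒜 m k obj fac E) : GoodTower ℬ m k obj fac E :=
  ⟨hT.1, hT.2.1, hT.2.2.1, fun j hj => h _ (hT.2.2.2 j hj)⟩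

lemma eq_zero_of_comp_hom_eq_zero {X Y Z : C} {f : X ⟶ Y} (e : Y ≅ Z)
    (h : f ≫ e.hom = 0) : f = 0 := by
  rw [← cancel_mono e.hom, h, zero_comp]

lemma deg_vanish {𝒜 : C → Prop} (ha : CondA 𝒜) {U V : C} {a b : ℤ}
    (hU : 𝒜 (U⟦a⟧)) (hV : 𝒜 (V⟦b⟧)) (hab : a < b) (f : U ⟶ V) : f = 0 := by
  have h1 : (shiftFunctor C a).map f ≫ ((shiftFunctorAdd' C b (a - b) a (by ring)).hom.app V)
      = 0 := ha _ _ hU hV (a - b) (by omega) _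
  have h2 : (shiftFunctor C a).map f = 0 :=
    eq_zero_of_comp_hom_eq_zero ((shiftFunctorAdd' C b (a - b) a (by ring)).app V) h1
  rwa [Functor.map_eq_zero_iff] at h2

lemma GoodTower.hom_zero_from {𝒜 : C → Prop} {m k obj fac E} (hT : GoodTower 𝒜 m k obj fac E)
    {Z : C} (hfac : ∀ j, j < k → ∀ f : fac j ⟶ Z, f = 0) (f : E ⟶ Z) : f = 0 := by
  obtain ⟨h0, ⟨ι⟩, htri, -⟩ := hT
  suffices H : ∀ j, j ≤ k → ∀ f : obj j ⟶ Z, f = 0 by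
    have h := H k le_rfl (ι.hom ≫ f)
    calc f = ι.inv ≫ (ι.hom ≫ f) := by simp
    _ = 0 := by rw [h, comp_zero]
  intro j
  induction j with
  | zero => intro _ f; exact h0.eq_of_src f 0
  | succ j ih =>
    intro hj f
    obtain ⟨a, b, c, hd⟩ := htri j (by omega)
    obtain ⟨g, hg⟩ := Triangle.yoneda_exact₂ _ hd f (by
      exact ih (by omega) (a ≫ f))
    rw [hg, hfac j (by omega) g]; exact comp_zero

lemma GoodTower.hom_zero_to {𝒜 : C → Prop} {m k obj fac E} (hT : GoodTower 𝒜 m k obj fac E)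
    {U : C} (hfac : ∀ j, j < k → ∀ f : U ⟶ fac j, f = 0) (f : U ⟶ E) : f = 0 := by
  obtain ⟨h0, ⟨ι⟩, htri, -⟩ := hT
  suffices H : ∀ j, j ≤ k → ∀ f : U ⟶ obj j, f = 0 by
    have h := H k le_rfl (f ≫ ι.inv)
    calc f = (f ≫ ι.inv) ≫ ι.hom := by simp
    _ = 0 := by rw [h, zero_comp]
  intro j
  induction j with
  | zero => intro _ f; exact h0.eq_of_tgt f 0
  | succ j ih =>
    intro hj f
    obtain ⟨a, b, c, hd⟩ := htri j (by omega)
    obtain ⟨g, hg⟩ := Triangle.coyoneda_exact₂ _ hd f (hfac j (by omega) _)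
    rw [hg, ih (by omega) g]; exact zero_comp

lemma GoodTower.shift {𝒜 : C → Prop} (hiso : CondIso 𝒜) {m k obj fac E}
    (hT : GoodTower 𝒜 m k obj fac E) (s : ℤ) :
    GoodTower 𝒜 (m - s) k (fun j => (obj j)⟦s⟧) (fun j => (fac j)⟦s⟧) (E⟦s⟧) := by
  obtain ⟨h0, ⟨ι⟩, htri, hfac⟩ := hT
  refine ⟨(shiftFunctor C s).map_isZero h0, ⟨(shiftFunctor C s).mapIso ι⟩, ?_, ?_⟩
  · intro j hj
    obtain ⟨f, g, h, hd⟩ := htri j hj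
    exact ⟨_, _, _, Triangle.shift_distinguished _ hd s⟩
  · intro j hj
    exact hiso _ _ ((shiftFunctorAdd' C s (m - s + j + 1) (m + j + 1) (by ring)).app (fac j))
      (hfac j hj)

/-- `E` has a tower with all factors in degrees `≤ n`. -/
def TowerLE (𝒜 : C → Prop) (n : ℤ) (E : C) : Prop :=
  ∃ (m : ℤ) (k : ℕ) (obj fac : ℕ → C), m + k ≤ n ∧ GoodTower 𝒜 m k obj fac E

lemma TowerLE.mono {𝒜 : C → Prop} {n n' : ℤ} {E : C} (h : n ≤ n') (hE : TowerLE 𝒜 n E) :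
    TowerLE 𝒜 n' E := by
  obtain ⟨m, k, obj, fac, hmk, hT⟩ := hE
  exact ⟨m, k, obj, fac, by omega, hT⟩

lemma TowerLE.of_iso {𝒜 : C → Prop} {n : ℤ} {E E' : C} (e : E ≅ E') (hE : TowerLE 𝒜 n E) :
    TowerLE 𝒜 n E' := by
  obtain ⟨m, k, obj, fac, hmk, h0, ⟨ι⟩, htri, hfac⟩ := hE
  exact ⟨m, k, obj, fac, hmk, h0, ⟨ι.trans e⟩, htri, hfac⟩

lemma TowerLE.shift {𝒜 : C → Prop} (hiso : CondIso 𝒜) {n : ℤ} {E : C}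
    (hE : TowerLE 𝒜 n E) (s : ℤ) : TowerLE 𝒜 (n - s) (E⟦s⟧) := by
  obtain ⟨m, k, obj, fac, hmk, hT⟩ := hE
  exact ⟨m - s, k, _, _, by omega, hT.shift hiso s⟩

lemma TowerLE.of_isZero {𝒜 : C → Prop} {n : ℤ} {E : C} (h : IsZero E) : TowerLE 𝒜 n E :=
  ⟨n, 0, fun _ => E, fun _ => E, by simp, h, ⟨Iso.refl E⟩,
    fun j hj => absurd hj (Nat.not_lt_zero j), fun j hj => absurd hj (Nat.not_lt_zero j)⟩

lemma TowerLE.single {𝒜 : C → Prop} {A : C} {d n : ℤ} (hA : 𝒜 (A⟦d⟧)) (hd : d ≤ n) :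
    TowerLE 𝒜 n A := by
  refine ⟨d - 1, 1, fun j => Nat.casesOn j 0 fun _ => A, fun _ => A, by push_cast; omega,
    isZero_zero C, ⟨Iso.refl A⟩, ?_, ?_⟩
  · intro j hj; obtain rfl : j = 0 := by omega
    exact ⟨0, 𝟙 A, 0, contractible_distinguished₁ A⟩
  · intro j hj; obtain rfl : j = 0 := by omega
    have h : (d - 1 + (0 : ℕ) + 1 : ℤ) = d := by push_cast; ring
    rw [h]; exact hA

lemma TowerLE.hom_zero_of_deg {𝒜 : C → Prop} (ha : CondA 𝒜) {U : C} {n : ℤ}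
    (hU : TowerLE 𝒜 n U) {V : C} {d : ℤ} (hV : 𝒜 (V⟦d⟧)) (hd : n < d) (f : U ⟶ V) : f = 0 := by
  obtain ⟨m, k, obj, fac, hmk, hT⟩ := hU
  exact hT.hom_zero_from
    (fun j hj f' => deg_vanish ha (hT.2.2.2 j hj) hV (by push_cast; omega) f') f

lemma TowerLE.hom_zero_to_tower {𝒜 : C → Prop} (ha : CondA 𝒜) {U : C} {n : ℤ}
    (hU : TowerLE 𝒜 n U) {mY : ℤ} {kY : ℕ} {objY facY : ℕ → C} {Y : C}
    (hY : GoodTower 𝒜 mY kY objY facY Y) (h : n ≤ mY) (f : U ⟶ Y) : f = 0 :=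
  hY.hom_zero_to (fun j hj f' => hU.hom_zero_of_deg ha (hY.2.2.2 j hj) (by
    have : (0:ℤ) ≤ (j : ℤ) := Int.natCast_nonneg j
    omega) f') f

/-- Changing the middle object of a distinguished triangle along an isomorphism. -/
lemma dist_iso_mid {X Y Y' Z : C} (e : Y ≅ Y') {f : X ⟶ Y} {g : Y ⟶ Z} {h : Z ⟶ X⟦(1:ℤ)⟧}
    (hT : Triangle.mk f g h ∈ distTriang C) :
    Triangle.mk (f ≫ e.hom) (e.inv ≫ g) h ∈ distTriang C :=
  isomorphic_distinguished _ hT _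
    (Triangle.isoMk _ _ (Iso.refl _) e.symm (Iso.refl _) (by dsimp [Triangle.mk]; simp) (by dsimp [Triangle.mk]; simp) (by dsimp [Triangle.mk]; simp))

/-- Changing the first object of a distinguished triangle along an isomorphism. -/
lemma dist_iso_fst {X X' Y Z : C} (e : X ≅ X') {f : X' ⟶ Y} {g : Y ⟶ Z} {h : Z ⟶ X'⟦(1:ℤ)⟧}
    (hT : Triangle.mk f g h ∈ distTriang C) :
    Triangle.mk (e.hom ≫ f) g (h ≫ e.inv⟦(1:ℤ)⟧') ∈ distTriang C :=
  isomorphic_distinguished _ hT _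
    (Triangle.isoMk _ _ e (Iso.refl _) (Iso.refl _) (by dsimp [Triangle.mk]; simp) (by dsimp [Triangle.mk]; simp)
      (by dsimp [Triangle.mk]; simp [← Functor.map_comp]))

end Aux
section Aux2
variable {C}

/-- The key construction: for any object with a tower, there is a map `w : X ⟶ A`
with `X` of degrees `≤ 0` such that every cone of `w` receives no maps from
objects with towers of degrees `≤ 0`. Proved by induction on the length of the
tower, using only the pretriangulated axioms and Hom-vanishing. -/
lemma main_claim {𝒜 : C → Prop} (ha : CondA 𝒜) :
    ∀ (k : ℕ) (m : ℤ) (obj fac : ℕ → C) (A : C), GoodTower 𝒜 m k obj fac A →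
    ∃ (X : C), TowerLE 𝒜 0 X ∧ ∃ w : X ⟶ A,
      ∀ (Z : C) (g : A ⟶ Z) (h : Z ⟶ X⟦(1 : ℤ)⟧), (Triangle.mk w g h ∈ distTriang C) →
      ∀ (U : C), TowerLE 𝒜 0 U → ∀ f : U ⟶ Z, f = 0 := by
  intro k
  induction k with
  | zero =>
    intro m obj fac A hT
    obtain ⟨h0, ⟨ι⟩, -, -⟩ := hT
    have hA : IsZero A := h0.of_iso ι.symm
    refine ⟨A, TowerLE.of_isZero hA, 𝟙 A, fun Z g h hT4 U hU f => ?_⟩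
    have hZ : IsZero Z := Triangle.isZero₃_of_isIso₁ _ hT4 (by change IsIso (𝟙 A); infer_instance)
    exact hZ.eq_of_tgt f 0
  | succ k IH =>
    intro m obj fac A hT
    obtain ⟨h0, ⟨ι⟩, htri, hfac⟩ := hT
    by_cases hc : m + ((k + 1 : ℕ) : ℤ) ≤ 0
    · -- the whole tower has degrees ≤ 0
      refine ⟨A, ⟨m, k + 1, obj, fac, hc, h0, ⟨ι⟩, htri, hfac⟩, 𝟙 A,
        fun Z g h hT4 U hU f => ?_⟩
      have hZ : IsZero Z := Triangle.isZero₃_of_isIso₁ _ hT4 (by change IsIso (𝟙 A); infer_instance)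
      exact hZ.eq_of_tgt f 0
    · -- the top factor has degree ≥ 1
      have hdeg : (0 : ℤ) < m + (k : ℤ) + 1 := by push_cast at hc; omega
      obtain ⟨X, hX, u, hcone⟩ := IH m obj fac (obj k)
        ⟨h0, ⟨Iso.refl _⟩, fun j hj => htri j (by omega), fun j hj => hfac j (by omega)⟩
      obtain ⟨a, b, c, htk⟩ := htri k (lt_add_one k)
      -- triangle (obj k) ⟶ A ⟶ fac k
      have hT2 : Triangle.mk (a ≫ ι.hom) (ι.inv ≫ b) c ∈ distTriang C := dist_iso_mid ι htk
      refine ⟨X, hX, u ≫ (a ≫ ι.hom), fun Z g h hT4 U hU f => ?_⟩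
      -- choose a cone of u
      obtain ⟨Y', p', q', hT1⟩ := distinguished_cocone_triangle u
      have hY'orth : ∀ f' : U ⟶ Y', f' = 0 := fun f' => hcone Y' p' q' hT1 U hU f'
      have hUfk : ∀ f' : U ⟶ fac k, f' = 0 := fun f' =>
        hU.hom_zero_of_deg ha (hfac k (lt_add_one k)) hdeg f'
      -- Step B : f ≫ h ≫ u⟦1⟧ = 0
      have h31 : h ≫ (u ≫ (a ≫ ι.hom))⟦(1:ℤ)⟧' = 0 := comp_distTriang_mor_zero₃₁ _ hT4
      have hφv : (f ≫ h ≫ u⟦(1:ℤ)⟧') ≫ (a ≫ ι.hom)⟦(1:ℤ)⟧' = 0 := by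
        rw [Category.assoc, Category.assoc, ← Functor.map_comp, h31, comp_zero]
      have hφ0 : f ≫ h ≫ u⟦(1:ℤ)⟧' = 0 := by
        obtain ⟨e, he⟩ := Triangle.coyoneda_exact₃ _
          (rot_of_distTriang _ hT2) (f ≫ h ≫ u⟦(1:ℤ)⟧') (by
            change (f ≫ h ≫ u⟦(1:ℤ)⟧') ≫ (-(a ≫ ι.hom)⟦(1:ℤ)⟧') = 0
            rw [Preadditive.comp_neg, hφv, neg_zero])
        exact he.trans (by rw [hUfk e]; exact zero_comp)
      -- Step C : f ≫ h = 0
      have hfh : f ≫ h = 0 := by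
        obtain ⟨e', he'⟩ := Triangle.coyoneda_exact₃ _
          (rot_of_distTriang _ hT1) (f ≫ h) (by
            change (f ≫ h) ≫ (-(u⟦(1:ℤ)⟧')) = 0
            rw [Preadditive.comp_neg, Category.assoc, hφ0, neg_zero])
        exact he'.trans (by rw [hY'orth e']; exact zero_comp)
      -- Step D : f factors through A
      obtain ⟨aa, haa⟩ := Triangle.coyoneda_exact₃ _ hT4 f hfh
      -- Step E : aa factors through obj k
      obtain ⟨bb, hbb⟩ := Triangle.coyoneda_exact₂ _ hT2 aa (hUfk _)
      -- Step F : (a ≫ ι.hom) ≫ g factors through Y'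
      have h12 : (u ≫ (a ≫ ι.hom)) ≫ g = 0 := comp_distTriang_mor_zero₁₂ _ hT4
      obtain ⟨r, hr⟩ := Triangle.yoneda_exact₂ _ hT1 ((a ≫ ι.hom) ≫ g) (by
        exact (Category.assoc _ _ _).symm.trans h12)
      have : f = ((bb ≫ p') ≫ r) := by
        rw [haa, hbb]
        exact (Category.assoc _ _ _).trans
          ((congrArg (fun x => bb ≫ x) hr).trans (Category.assoc _ _ _).symm)
      rw [this, hY'orth (bb ≫ p')]; exact zero_comp

end Aux2
section Aux3
variable {C}

lemma goodTower_of_hasHeartFiltration {𝒜 : C → Prop} {E : C} (hE : HasHeartFiltration C 𝒜 E) :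
    ∃ (m : ℤ) (k : ℕ), 0 < k ∧ ∃ obj fac : ℕ → C, GoodTower 𝒜 m k obj fac E := by
  obtain ⟨m, k, kpos, obj, fac, h0, htop, htri, hfac⟩ := hE
  refine ⟨m, k, kpos, fun j => if h : j < k + 1 then obj ⟨j, h⟩ else E,
    fun j => if h : j < k then fac ⟨j, h⟩ else E, ?_, ?_, ?_, ?_⟩
  · dsimp only
    rw [dif_pos (show (0:ℕ) < k + 1 by omega)]
    convert h0 using 2
    all_goals exact Fin.ext (by simp)
  · dsimp only
    rw [dif_pos (show k < k + 1 by omega)]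
    exact ⟨eqToIso htop⟩
  · intro j hj
    dsimp only
    rw [dif_pos (show j < k + 1 by omega), dif_pos (show j + 1 < k + 1 by omega),
      dif_pos hj]
    exact htri ⟨j, hj⟩
  · intro j hj
    dsimp only
    rw [dif_pos hj]
    exact hfac ⟨j, hj⟩

lemma hasHeartFiltration_of_goodTower {𝒜 : C → Prop} {m : ℤ} {k : ℕ} {obj fac : ℕ → C} {E : C}
    (kpos : 0 < k) (hT : GoodTower 𝒜 m k obj fac E) : HasHeartFiltration C 𝒜 E := by
  obtain ⟨h0, ⟨ι⟩, htri, hfac⟩ := hT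
  refine ⟨m, k, kpos, fun j => if (j : ℕ) = k then E else obj j, fun j => fac j, ?_, ?_, ?_, ?_⟩
  · dsimp only
    rw [if_neg (show ¬(((0 : Fin (k+1)) : ℕ) = k) by simp only [Fin.val_zero]; omega)]
    exact h0
  · dsimp only
    rw [if_pos (Fin.val_last k)]
  · intro j
    have hjk : (j : ℕ) < k := j.isLt
    dsimp only
    simp only [Fin.coe_castSucc, Fin.val_succ]
    rw [if_neg (show ¬((j:ℕ) = k) by omega)]
    by_cases hj1 : (j : ℕ) + 1 = k
    · rw [if_pos hj1]
      obtain ⟨f, g, h, hd⟩ := htri (j : ℕ) (by omega)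
      have hι : obj ((j : ℕ) + 1) ≅ E := by rw [hj1]; exact ι
      exact ⟨f ≫ hι.hom, hι.inv ≫ g, h, dist_iso_mid hι hd⟩
    · rw [if_neg hj1]
      exact htri (j : ℕ) (by omega)
  · intro j
    exact hfac j j.isLt

end Aux3
section Aux4
variable {C}

/-- The t-structure constructed from a full subcategory satisfying (a) and (b). -/
noncomputable def mkTStructure (𝒜 : C → Prop) (hiso : CondIso 𝒜) (ha : CondA 𝒜)
    (hb : ∀ E : C, ¬ IsZero E → HasHeartFiltration C 𝒜 E) : TStructure C where
  le n X := TowerLE 𝒜 n X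
  ge n X := ∀ U : C, TowerLE 𝒜 (n - 1) U → ∀ f : U ⟶ X, f = 0
  le_isClosedUnderIsomorphisms n := ⟨fun e hX => hX.of_iso e⟩
  ge_isClosedUnderIsomorphisms n := ⟨fun e hX U hU f => by
    have h1 : f ≫ e.inv = 0 := hX U hU (f ≫ e.inv)
    rw [← cancel_mono e.inv, h1, zero_comp]⟩
  le_shift n a n' h X hX := (hX.shift hiso a).mono (by omega)
  ge_shift n a n' h X hX U hU f := by
    have hU' : TowerLE 𝒜 (n - 1) (U⟦(-a : ℤ)⟧) := ((hU.shift hiso (-a)).mono (by omega))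
    have hz := hX _ hU' ((shiftFunctor C (-a)).map f ≫ ((shiftEquiv C a).unitIso.symm.app X).hom)
    have h2 : (shiftFunctor C (-a)).map f = 0 :=
      eq_zero_of_comp_hom_eq_zero ((shiftEquiv C a).unitIso.symm.app X) hz
    rwa [Functor.map_eq_zero_iff] at h2
  zero' X Y f hX hY := hY X (hX.mono (by omega)) f
  le_zero_le X hX := hX.mono (by omega)
  ge_one_le X hX U hU f := hX U (hU.mono (by omega)) f
  exists_triangle_zero_one A := by
    by_cases hA : IsZero A
    · exact ⟨A, 0, TowerLE.of_isZero hA, fun U hU f => (isZero_zero C).eq_of_tgt f 0,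
        𝟙 A, 0, 0, contractible_distinguished A⟩
    · obtain ⟨m, k, kpos, obj, fac, hGT⟩ := goodTower_of_hasHeartFiltration (hb A hA)
      obtain ⟨X, hX, w, hcone⟩ := main_claim ha k m obj fac A hGT
      obtain ⟨Z, g, h, hT⟩ := distinguished_cocone_triangle w
      exact ⟨X, Z, hX, fun U hU f => hcone Z g h hT U (hU.mono (by omega)) f, w, g, h, hT⟩

lemma mk_bounded (𝒜 : C → Prop) (hiso : CondIso 𝒜) (ha : CondA 𝒜)
    (hb : ∀ E : C, ¬ IsZero E → HasHeartFiltration C 𝒜 E) :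
    TStructureIsBounded C (mkTStructure 𝒜 hiso ha hb) := by
  intro X
  by_cases hX : IsZero X
  · exact ⟨0, 0, TowerLE.of_isZero hX, fun U hU f => hX.eq_of_tgt f 0⟩
  · obtain ⟨m, k, kpos, obj, fac, hGT⟩ := goodTower_of_hasHeartFiltration (hb X hX)
    refine ⟨m + 1, m + k, ⟨m, k, obj, fac, le_refl _, hGT⟩, fun U hU f => ?_⟩
    exact hU.hom_zero_to_tower ha hGT (by omega) f

lemma mk_heart (𝒜 : C → Prop) (hiso : CondIso 𝒜) (h0 : ∀ X : C, IsZero X → 𝒜 X)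
    (ha : CondA 𝒜) {X : C} (hle : TowerLE 𝒜 0 X)
    (hge : ∀ U : C, TowerLE 𝒜 (-1 : ℤ) U → ∀ f : U ⟶ X, f = 0) : 𝒜 X := by
  obtain ⟨m, k, obj, fac, hmk, hz, ⟨ι⟩, htri, hfac⟩ := hle
  rcases k with _ | k'
  · exact h0 X (hz.of_iso ι.symm)
  by_cases hdeg : m + ((k' + 1 : ℕ) : ℤ) ≤ -1
  · refine h0 X ?_
    rw [IsZero.iff_id_eq_zero]
    exact hge X ⟨m, k' + 1, obj, fac, hdeg, hz, ⟨ι⟩, htri, hfac⟩ (𝟙 X)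
  · have hmk0 : m + ((k' : ℕ) : ℤ) + 1 = 0 := by push_cast at hmk hdeg ⊢; omega
    obtain ⟨f, g, h, hT⟩ := htri k' (lt_add_one k')
    have hpre : TowerLE 𝒜 (-1 : ℤ) (obj k') :=
      ⟨m, k', obj, fac, by push_cast at hmk0 ⊢; omega, hz, ⟨Iso.refl _⟩,
        fun j hj => htri j (by omega), fun j hj => hfac j (by omega)⟩
    have hf0 : f = 0 := by
      have h1 : f ≫ ι.hom = 0 := hge _ hpre (f ≫ ι.hom)
      rw [← cancel_mono ι.hom, h1, zero_comp]
    have hfac0 : 𝒜 ((fac k')⟦(0 : ℤ)⟧) := by rw [← hmk0]; exact hfac k' (lt_add_one k')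
    have hzk : IsZero (obj k') := by
      obtain ⟨q, hq⟩ := Triangle.coyoneda_exact₂ _ (inv_rot_of_distTriang _ hT)
        (𝟙 (obj k')) (by exact (Category.id_comp _).trans hf0)
      have hq0 : q = 0 := hpre.hom_zero_of_deg ha
        (hiso _ _ ((shiftFunctorAdd' C (-1) 1 0 (by ring)).app (fac k')) hfac0)
        (by omega) q
      rw [IsZero.iff_id_eq_zero, hq, hq0]; exact zero_comp
    have hgiso : IsIso g := (Triangle.isZero₁_iff_isIso₂ _ hT).1 hzk
    have h𝒜fac : 𝒜 (fac k') := hiso _ _ ((shiftFunctorZero C ℤ).app (fac k')) hfac0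
    exact hiso _ _ ((asIso g).symm ≪≫ ι) h𝒜fac

end Aux4
section Aux5
variable {C}

lemma tvanish (t : TStructure C) {a b : ℤ} (hab : a < b) {X Y : C}
    (hX : t.le a X) (hY : t.ge b Y) (f : X ⟶ Y) : f = 0 := by
  have h1 : t.le 0 (X⟦a⟧) := t.le_shift a a 0 (by omega) X hX
  have h2 : t.ge 1 (Y⟦a⟧) :=
    t.ge_antitone (show (1:ℤ) ≤ b - a by omega) _ (t.ge_shift b a (b - a) (by omega) Y hY)
  have hz := t.zero' ((shiftFunctor C a).map f) h1 h2
  rwa [Functor.map_eq_zero_iff] at hz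

lemma le_of_orth (t : TStructure C) {n : ℤ} {X : C}
    (hX : ∀ Y, t.ge (n + 1) Y → ∀ f : X ⟶ Y, f = 0) : t.le n X := by
  obtain ⟨X', Y', hX', hY', a, b, c, hT⟩ := t.exists_triangle X n (n + 1) rfl
  have hb : b = 0 := hX Y' hY' b
  have h1 : IsZero Y' := by
    obtain ⟨r, hr⟩ := Triangle.yoneda_exact₂ _ (rot_of_distTriang _ hT) (𝟙 Y')
      (by exact (Category.comp_id _).trans hb)
    rw [IsZero.iff_id_eq_zero, hr,
      tvanish t (show n - 1 < n + 1 by omega) (t.le_shift n 1 (n - 1) (by omega) X' hX') hY' r]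
    exact comp_zero
  have : IsIso a := (Triangle.isZero₃_iff_isIso₁ _ hT).1 h1
  exact (t.le n).prop_of_iso (asIso a) hX'

lemma ge_of_orth (t : TStructure C) {n : ℤ} {Y : C}
    (hY : ∀ X, t.le (n - 1) X → ∀ f : X ⟶ Y, f = 0) : t.ge n Y := by
  obtain ⟨X', Y', hX', hY', a, b, c, hT⟩ := t.exists_triangle Y (n - 1) n (by omega)
  have ha0 : a = 0 := hY X' hX' a
  have h1 : IsZero X' := by
    obtain ⟨q, hq⟩ := Triangle.coyoneda_exact₂ _ (inv_rot_of_distTriang _ hT) (𝟙 X')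
      (by exact (Category.id_comp _).trans ha0)
    have hq0 : q = 0 := tvanish t (show n - 1 < n + 1 by omega) hX'
      (t.ge_shift n (-1) (n + 1) (by omega) Y' hY') q
    rw [IsZero.iff_id_eq_zero, hq, hq0]; exact zero_comp
  have : IsIso b := (Triangle.isZero₁_iff_isIso₂ _ hT).1 h1
  exact (t.ge n).prop_of_iso (asIso b).symm hY'

lemma le₂ (t : TStructure C) {T : Triangle C} (hT : T ∈ distTriang C) {n : ℤ}
    (h₁ : t.le n T.obj₁) (h₃ : t.le n T.obj₃) : t.le n T.obj₂ := by
  refine le_of_orth t fun Y hY f => ?_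
  obtain ⟨r, hr⟩ := Triangle.yoneda_exact₂ _ hT f (tvanish t (lt_add_one n) h₁ hY _)
  rw [hr, tvanish t (lt_add_one n) h₃ hY r, comp_zero]

lemma ge₂ (t : TStructure C) {T : Triangle C} (hT : T ∈ distTriang C) {n : ℤ}
    (h₁ : t.ge n T.obj₁) (h₃ : t.ge n T.obj₃) : t.ge n T.obj₂ := by
  refine ge_of_orth t fun U hU f => ?_
  obtain ⟨e, he⟩ := Triangle.coyoneda_exact₂ _ hT f (tvanish t (show n-1 < n by omega) hU h₃ _)
  rw [he, tvanish t (show n-1 < n by omega) hU h₁ e, zero_comp]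

lemma t_tower (t : TStructure C) :
    ∀ (k : ℕ) (m : ℤ) (X : C), t.le (m + k) X → t.ge (m + 1) X →
    ∃ obj fac : ℕ → C, GoodTower (heartP C t) m k obj fac X := by
  intro k
  induction k with
  | zero =>
    intro m X hle hge
    have hz : IsZero X := by
      rw [IsZero.iff_id_eq_zero]
      exact tvanish t (lt_add_one m) (by simpa using hle) hge (𝟙 X)
    exact ⟨fun _ => X, fun _ => X, hz, ⟨Iso.refl X⟩,
      fun j hj => absurd hj (Nat.not_lt_zero j), fun j hj => absurd hj (Nat.not_lt_zero j)⟩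
  | succ k IH =>
    intro m X hle hge
    have hle' : t.le (m + (k : ℤ) + 1) X := by
      rwa [show (m + ((k + 1 : ℕ) : ℤ)) = m + (k:ℤ) + 1 by push_cast; ring] at hle
    obtain ⟨X', Y, hX', hY, a, b, c, hT⟩ := t.exists_triangle X (m + k) (m + k + 1) rfl
    have hYle : t.le (m + (k:ℤ) + 1) Y := le₂ t (rot_of_distTriang _ hT) hle'
      (t.le_monotone (show m + (k:ℤ) - 1 ≤ m + k + 1 by omega) _
        (t.le_shift (m + k) 1 (m + k - 1) (by omega) X' hX'))
    have hX'ge : t.ge (m + 1) X' := ge₂ t (inv_rot_of_distTriang _ hT)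
      (t.ge_antitone (show m + 1 ≤ m + (k:ℤ) + 2 by omega) _
        (t.ge_shift (m + k + 1) (-1) (m + k + 2) (by omega) Y hY)) hge
    obtain ⟨obj, fac, hz, ⟨ι⟩, htri, hfac⟩ := IH m X' hX' hX'ge
    refine ⟨fun j => if j = k + 1 then X else obj j, fun j => if j = k then Y else fac j,
      ?_, ?_, ?_, ?_⟩
    · dsimp only; rw [if_neg (show ¬(0 = k + 1) by omega)]; exact hz
    · dsimp only; rw [if_pos rfl]; exact ⟨Iso.refl X⟩
    · intro j hj
      dsimp only
      by_cases hjk : j = k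
      · subst hjk
        rw [if_neg (show ¬(j = j + 1) by omega), if_pos rfl, if_pos rfl]
        exact ⟨ι.hom ≫ a, b, c ≫ (ι.inv)⟦(1:ℤ)⟧', dist_iso_fst ι hT⟩
      · rw [if_neg (show ¬(j = k + 1) by omega), if_neg (show ¬(j + 1 = k + 1) by omega),
          if_neg hjk]
        exact htri j (by omega)
    · intro j hj
      dsimp only
      by_cases hjk : j = k
      · subst hjk
        rw [if_pos rfl]
        exact ⟨t.le_shift (m + j + 1) (m + j + 1) 0 (by omega) Y hYle,
          t.ge_shift (m + j + 1) (m + j + 1) 0 (by omega) Y hY⟩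
      · rw [if_neg hjk]
        exact hfac j (by omega)

end Aux5
section Aux6
variable {C}

lemma heart_condA (t : TStructure C) : CondA (heartP C t) := fun _ B hA hB k hk f =>
  tvanish t (show (0:ℤ) < -k by omega) hA.1 (t.ge_shift 0 k (-k) (by omega) B hB.2) f

/-- Towers with degrees `≤ n` for bounded objects which are `≤ n`. -/
lemma t_tower_le (t : TStructure C) (hb : TStructureIsBounded C t) {n : ℤ} {X : C}
    (h : t.le n X) : TowerLE (heartP C t) n X := by
  obtain ⟨m', n', hle', hge'⟩ := hb X
  have hge : t.ge (min (m' - 1) (n - 1) + 1) X := t.ge_antitone (by omega) _ hge'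
  have hle : t.le (min (m' - 1) (n - 1) + ((n - min (m' - 1) (n - 1)).toNat : ℤ)) X := by
    rwa [show min (m' - 1) (n - 1) + ((n - min (m' - 1) (n - 1)).toNat : ℤ) = n by omega]
  obtain ⟨obj, fac, hT⟩ := t_tower t _ _ X hle hge
  exact ⟨_, _, obj, fac, by omega, hT⟩

/-- Towers with degrees `≥ n` for bounded objects which are `≥ n`. -/
lemma t_tower_ge (t : TStructure C) (hb : TStructureIsBounded C t) {n : ℤ} {X : C}
    (h : t.ge n X) : ∃ (k : ℕ) (obj fac : ℕ → C), GoodTower (heartP C t) (n - 1) k obj fac X := by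
  obtain ⟨m', n', hle', hge'⟩ := hb X
  have hle : t.le ((n - 1) + ((max n' n - (n - 1)).toNat : ℤ)) X := by
    rw [show (n - 1) + ((max n' n - (n - 1)).toNat : ℤ) = max n' n by omega]
    exact t.le_monotone (le_max_left _ _) _ hle'
  have hge : t.ge ((n - 1) + 1) X := by rwa [show n - 1 + 1 = n by ring]
  obtain ⟨obj, fac, hT⟩ := t_tower t _ _ X hle hge
  exact ⟨_, obj, fac, hT⟩

lemma tLE_trans {t₁ t₂ : TStructure C} (hb₁ : TStructureIsBounded C t₁)
    (hb₂ : TStructureIsBounded C t₂) (hh : ∀ X : C, heartP C t₁ X ↔ heartP C t₂ X)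
    {n : ℤ} {X : C} (h : t₁.le n X) : t₂.le n X := by
  have ha : CondA (heartP C t₁) := heart_condA t₁
  have hTX : TowerLE (heartP C t₁) n X := t_tower_le t₁ hb₁ h
  obtain ⟨P, Q, hP, hQ, a, b, c, hT⟩ := t₂.exists_triangle X n (n + 1) rfl
  obtain ⟨kq, objQ, facQ, hTQ⟩ := t_tower_ge t₂ hb₂ hQ
  have hTQ' : GoodTower (heartP C t₁) (n + 1 - 1) kq objQ facQ Q :=
    GoodTower.mono (fun V hV => (hh V).mpr hV) hTQ
  have hb0 : b = 0 := hTX.hom_zero_to_tower ha hTQ' (by omega) b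
  have hQ0 : IsZero Q := by
    obtain ⟨r, hr⟩ := Triangle.yoneda_exact₂ _ (rot_of_distTriang _ hT) (𝟙 Q)
      (by exact (Category.comp_id _).trans hb0)
    rw [IsZero.iff_id_eq_zero, hr,
      tvanish t₂ (show n - 1 < n + 1 by omega) (t₂.le_shift n 1 (n - 1) (by omega) P hP) hQ r]
    exact comp_zero
  have : IsIso a := (Triangle.isZero₃_iff_isIso₁ _ hT).1 hQ0
  exact (t₂.le n).prop_of_iso (asIso a) hP

lemma tGE_trans {t₁ t₂ : TStructure C} (hb₁ : TStructureIsBounded C t₁)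
    (hb₂ : TStructureIsBounded C t₂) (hh : ∀ X : C, heartP C t₁ X ↔ heartP C t₂ X)
    {n : ℤ} {X : C} (h : t₁.ge n X) : t₂.ge n X := by
  have ha : CondA (heartP C t₁) := heart_condA t₁
  obtain ⟨kx, objX, facX, hTX⟩ := t_tower_ge t₁ hb₁ h
  obtain ⟨P, Q, hP, hQ, a, b, c, hT⟩ := t₂.exists_triangle X (n - 1) n (by omega)
  have hTP : TowerLE (heartP C t₂) (n - 1) P := t_tower_le t₂ hb₂ hP
  have hTP' : TowerLE (heartP C t₁) (n - 1) P := by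
    obtain ⟨m, k, obj, fac, hmk, hG⟩ := hTP
    exact ⟨m, k, obj, fac, hmk, GoodTower.mono (fun V hV => (hh V).mpr hV) hG⟩
  have ha0 : a = 0 := hTP'.hom_zero_to_tower ha hTX (by omega) a
  have hP0 : IsZero P := by
    obtain ⟨q, hq⟩ := Triangle.coyoneda_exact₂ _ (inv_rot_of_distTriang _ hT) (𝟙 P)
      (by exact (Category.id_comp _).trans ha0)
    rw [IsZero.iff_id_eq_zero, hq,
      tvanish t₂ (show n - 1 < n + 1 by omega) hP
        (t₂.ge_shift n (-1) (n + 1) (by omega) Q hQ) q]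
    exact zero_comp
  have : IsIso b := (Triangle.isZero₁_iff_isIso₂ _ hT).1 hP0
  exact (t₂.ge n).prop_of_iso (asIso b).symm hQ

lemma tstructure_ext {t₁ t₂ : TStructure C} (hLE : t₁.le = t₂.le) (hGE : t₁.ge = t₂.ge) :
    t₁ = t₂ := by
  cases t₁; cases t₂
  dsimp only at hLE hGE
  subst hLE; subst hGE
  rfl

end Aux6

/-- (1) Two bounded t-structures with the same heart coincide.
(2) An isomorphism-closed full additive subcategory `𝒜` of `C` is the heart of a bounded
t-structure if and only if (a) `Hom(A, B[k]) = 0` for all `A, B ∈ 𝒜` and `k < 0`, and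
(b) every nonzero object of `C` has a finite filtration by distinguished triangles whose
factors are shifts of objects of `𝒜` with strictly increasing degrees. -/
theorem bounded_tStructure_determined_by_heart_and_heart_characterization :
    (∀ t₁ t₂ : TStructure C, TStructureIsBounded C t₁ → TStructureIsBounded C t₂ →
      (∀ X : C, heartP C t₁ X ↔ heartP C t₂ X) → t₁ = t₂) ∧
    (∀ 𝒜 : C → Prop, (∀ X Y : C, (X ≅ Y) → 𝒜 X → 𝒜 Y) → (∀ X : C, IsZero X → 𝒜 X) →
      ((∃ t : TStructure C, TStructureIsBounded C t ∧ ∀ X : C, heartP C t X ↔ 𝒜 X) ↔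
        ((∀ (A B : C), 𝒜 A → 𝒜 B → ∀ k : ℤ, k < 0 → ∀ f : A ⟶ B⟦k⟧, f = 0) ∧
          (∀ E : C, ¬ IsZero E → HasHeartFiltration C 𝒜 E)))) := by
  constructor
  · intro t₁ t₂ hb₁ hb₂ hh
    refine tstructure_ext ?_ ?_
    · funext n X
      exact propext ⟨fun h => tLE_trans hb₁ hb₂ hh h,
        fun h => tLE_trans hb₂ hb₁ (fun X => (hh X).symm) h⟩
    · funext n X
      exact propext ⟨fun h => tGE_trans hb₁ hb₂ hh h,
        fun h => tGE_trans hb₂ hb₁ (fun X => (hh X).symm) h⟩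
  · intro 𝒜 hiso h0
    constructor
    · rintro ⟨t, hbd, hh⟩
      constructor
      · intro A B hA hB k hk f
        exact tvanish t (show (0:ℤ) < -k by omega) ((hh A).mpr hA).1
          (t.ge_shift 0 k (-k) (by omega) B ((hh B).mpr hB).2) f
      · intro E _
        obtain ⟨m', n', hle, hge⟩ := hbd E
        have hge' : t.ge (min (m' - 1) (n' - 1) + 1) E := t.ge_antitone (by omega) _ hge
        have hle' : t.le (min (m' - 1) (n' - 1)
            + ((n' - min (m' - 1) (n' - 1)).toNat : ℤ)) E := by
          rwa [show min (m' - 1) (n' - 1)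
            + ((n' - min (m' - 1) (n' - 1)).toNat : ℤ) = n' by omega]
        obtain ⟨obj, fac, hGT⟩ := t_tower t _ _ E hle' hge'
        exact hasHeartFiltration_of_goodTower (by omega)
          (GoodTower.mono (fun V hV => (hh V).mp hV) hGT)
    · rintro ⟨ha, hb⟩
      refine ⟨mkTStructure 𝒜 hiso ha hb, mk_bounded 𝒜 hiso ha hb, fun X => ⟨?_, ?_⟩⟩
      · intro hX
        exact mk_heart 𝒜 hiso h0 ha hX.1 (fun U hU f => hX.2 U (hU.mono (by omega)) f)
      · intro hX
        exact ⟨TowerLE.single (hiso _ _ ((shiftFunctorZero C ℤ).symm.app X) hX) le_rfl,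
          fun U hU f => hU.hom_zero_of_deg ha
            (hiso _ _ ((shiftFunctorZero C ℤ).symm.app X) hX) (by omega) f⟩
end

section
/- Suppose A is the heart of a bounded t-structure on a triangulated category D, and for E ∈ D let H^i(E) ∈ A denote the i-th cohomology object of E with respect to this t-structure. Let (T,F) be a torsion pair in A. Then the full subcategory A♯ = { E ∈ D : H^i(E) = 0 for i ∉ {−1,0}, H^{−1}(E) ∈ F and H^0(E) ∈ T } is the heart of a bounded t-structure on D. -/
/-!
STATEMENT 4: tilting a bounded t-structure at a torsion pair in its heart (Happel–Reiten–Smalø).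
-/

open CategoryTheory CategoryTheory.Limits CategoryTheory.Pretriangulated
open CategoryTheory.Triangulated

universe v u

variable (C : Type u) [Category.{v} C] [HasZeroObject C] [HasShift C ℤ]
  [Preadditive C] [∀ n : ℤ, (CategoryTheory.shiftFunctor C n).Additive] [Pretriangulated C]

/-- `(𝒯, 𝒻)` is a torsion pair in the heart `H`: both are subcategories of `H`, there
are no nonzero maps from torsion to torsion-free objects, and every object `E` of `H`
sits in a short exact sequence `0 → T → E → F → 0` in `H` (i.e. a distinguished triangle
`T → E → F → T[1]`) with `T ∈ 𝒯` and `F ∈ 𝒻`. -/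
def IsTorsionPair (H 𝒯 𝒻 : C → Prop) : Prop :=
  (∀ X : C, 𝒯 X → H X) ∧ (∀ X : C, 𝒻 X → H X) ∧
  (∀ (T F : C), 𝒯 T → 𝒻 F → ∀ f : T ⟶ F, f = 0) ∧
  (∀ E : C, H E → ∃ (T F : C) (_ : 𝒯 T) (_ : 𝒻 F) (f : T ⟶ E) (g : E ⟶ F)
    (h : F ⟶ T⟦(1 : ℤ)⟧), Triangle.mk f g h ∈ distTriang C)

/-- The tilt `A♯ = {E : H^i(E) = 0 for i ∉ {-1,0}, H^{-1}(E) ∈ 𝒻, H^0(E) ∈ 𝒯}` of a heart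
at a torsion pair `(𝒯, 𝒻)`: equivalently (via the truncation triangle
`H^{-1}(E)[1] → E → H^0(E)`), the objects `E` fitting in a distinguished triangle
`F[1] → E → T → F[2]` with `F ∈ 𝒻` and `T ∈ 𝒯`. -/
def tiltedHeart (𝒯 𝒻 : C → Prop) : C → Prop := fun E =>
  ∃ (F T : C) (_ : 𝒻 F) (_ : 𝒯 T) (f : F⟦(1 : ℤ)⟧ ⟶ E) (g : E ⟶ T)
    (h : T ⟶ (F⟦(1 : ℤ)⟧)⟦(1 : ℤ)⟧), Triangle.mk f g h ∈ distTriang C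

namespace TiltAux

variable {C : Type u} [Category.{v} C] [HasZeroObject C] [HasShift C ℤ]
  [Preadditive C] [∀ n : ℤ, (CategoryTheory.shiftFunctor C n).Additive] [Pretriangulated C]

variable (t : TStructure C)
set_option linter.unusedSectionVars false

section MkExact

variable {X₁ X₂ X₃ : C} {f : X₁ ⟶ X₂} {g : X₂ ⟶ X₃} {h : X₃ ⟶ X₁⟦(1 : ℤ)⟧}

lemma mk_yoneda_exact₂ (hT : Triangle.mk f g h ∈ distTriang C) {X : C} (φ : X₂ ⟶ X)
    (hφ : f ≫ φ = 0) : ∃ ψ : X₃ ⟶ X, φ = g ≫ ψ :=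
  Triangle.yoneda_exact₂ _ hT φ hφ

lemma mk_yoneda_exact₃ (hT : Triangle.mk f g h ∈ distTriang C) {X : C} (φ : X₃ ⟶ X)
    (hφ : g ≫ φ = 0) : ∃ ψ : X₁⟦(1 : ℤ)⟧ ⟶ X, φ = h ≫ ψ :=
  Triangle.yoneda_exact₃ _ hT φ hφ

lemma mk_coyoneda_exact₁ (hT : Triangle.mk f g h ∈ distTriang C) {X : C}
    (φ : X ⟶ X₁⟦(1 : ℤ)⟧) (hφ : φ ≫ f⟦(1 : ℤ)⟧' = 0) : ∃ ψ : X ⟶ X₃, φ = ψ ≫ h :=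
  Triangle.coyoneda_exact₁ _ hT φ hφ

lemma mk_coyoneda_exact₂ (hT : Triangle.mk f g h ∈ distTriang C) {X : C} (φ : X ⟶ X₂)
    (hφ : φ ≫ g = 0) : ∃ ψ : X ⟶ X₁, φ = ψ ≫ f :=
  Triangle.coyoneda_exact₂ _ hT φ hφ

lemma mk_coyoneda_exact₃ (hT : Triangle.mk f g h ∈ distTriang C) {X : C} (φ : X ⟶ X₃)
    (hφ : φ ≫ h = 0) : ∃ ψ : X ⟶ X₂, φ = ψ ≫ g :=
  Triangle.coyoneda_exact₃ _ hT φ hφ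

lemma mk_invRotate_coyoneda_exact₂ (hT : Triangle.mk f g h ∈ distTriang C) {X : C}
    (φ : X ⟶ X₁) (hφ : φ ≫ f = 0) : ∃ ψ : X ⟶ X₃⟦(-1 : ℤ)⟧,
      φ = ψ ≫ (-h⟦(-1 : ℤ)⟧' ≫ (shiftEquiv C (1 : ℤ)).unitIso.inv.app X₁) :=
  Triangle.coyoneda_exact₂ _ (inv_rot_of_distTriang _ hT) φ hφ

end MkExact

lemma zero_of_lt {a b : ℤ} (h : a < b) {X Y : C} (hX : t.le a X) (hY : t.ge b Y)
    (f : X ⟶ Y) : f = 0 := by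
  have hX' : t.le 0 (X⟦b - 1⟧) :=
    t.le_shift (b - 1) (b - 1) 0 (by omega) X (t.le_monotone (show a ≤ b - 1 by omega) X hX)
  have hY' : t.ge 1 (Y⟦b - 1⟧) := t.ge_shift b (b - 1) 1 (by omega) Y hY
  have hz := t.zero' ((shiftFunctor C (b - 1)).map f) hX' hY'
  apply (shiftFunctor C (b - 1)).map_injective
  rw [hz, Functor.map_zero]

lemma zero_src_iso {X X' Y : C} (e : X ≅ X') (h : ∀ f : X ⟶ Y, f = 0) (f : X' ⟶ Y) :
    f = 0 := by
  have h2 : e.hom ≫ f = 0 := h _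
  calc f = e.inv ≫ (e.hom ≫ f) := by simp
  _ = 0 := by rw [h2, comp_zero]

lemma zero_tgt_iso {X Y Y' : C} (e : Y ≅ Y') (h : ∀ f : X ⟶ Y, f = 0) (f : X ⟶ Y') :
    f = 0 := by
  have h2 : f ≫ e.inv = 0 := h _
  calc f = (f ≫ e.inv) ≫ e.hom := by simp
  _ = 0 := by rw [h2, zero_comp]

def shiftIso (X : C) {a b : ℤ} (h : a = b) : X⟦a⟧ ≅ X⟦b⟧ := eqToIso (by rw [h])

lemma LE_iff (n : ℤ) (X : C) :
    t.le n X ↔ ∀ Z : C, t.ge (n + 1) Z → ∀ f : X ⟶ Z, f = 0 := by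
  constructor
  · intro hX Z hZ f
    exact zero_of_lt t (by omega) hX hZ f
  · intro h
    obtain ⟨X₁, X₂, h₁, h₂, f, g, hco, hT⟩ := t.exists_triangle X n (n + 1) rfl
    have hg : g = 0 := h _ h₂ g
    obtain ⟨r, hr⟩ := mk_yoneda_exact₃ hT (𝟙 X₂)
      (by rw [hg, zero_comp])
    have hr0 : r = 0 := zero_of_lt t (show n - 1 < n + 1 by omega)
      (t.le_shift n 1 (n - 1) (by omega) X₁ h₁) h₂ r
    have hzero : IsZero X₂ := by
      rw [IsZero.iff_id_eq_zero, hr, hr0, comp_zero]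
    haveI : IsIso (Triangle.mk f g hco).mor₁ :=
      (Triangle.isZero₃_iff_isIso₁ _ hT).1 hzero
    exact ObjectProperty.prop_of_iso (t.le n) (@asIso _ _ _ _ (Triangle.mk f g hco).mor₁ this) h₁

lemma GE_iff (n : ℤ) (X : C) :
    t.ge n X ↔ ∀ Z : C, t.le (n - 1) Z → ∀ f : Z ⟶ X, f = 0 := by
  constructor
  · intro hX Z hZ f
    exact zero_of_lt t (by omega) hZ hX f
  · intro h
    obtain ⟨X₁, X₂, h₁, h₂, f, g, hco, hT⟩ := t.exists_triangle X (n - 1) n (by omega)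
    have hf : f = 0 := h _ h₁ f
    obtain ⟨r, hr⟩ := mk_coyoneda_exact₁ hT (𝟙 (X₁⟦(1 : ℤ)⟧))
      (by rw [hf, Functor.map_zero, comp_zero])
    have hr0 : r = 0 := zero_of_lt t (show n - 2 < n by omega)
      (t.le_shift (n - 1) 1 (n - 2) (by omega) X₁ h₁) h₂ r
    have hid : 𝟙 (X₁⟦(1 : ℤ)⟧) = 0 := by rw [hr, hr0, zero_comp]
    have hzero : IsZero X₁ := by
      rw [IsZero.iff_id_eq_zero]
      apply (shiftFunctor C (1 : ℤ)).map_injective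
      rw [CategoryTheory.Functor.map_id, Functor.map_zero]
      exact hid
    haveI : IsIso (Triangle.mk f g hco).mor₂ :=
      (Triangle.isZero₁_iff_isIso₂ _ hT).1 hzero
    exact ObjectProperty.prop_of_iso (t.ge n) (@asIso _ _ _ _ (Triangle.mk f g hco).mor₂ this).symm h₂

lemma LE_ext (n : ℤ) {T : Triangle C} (hT : T ∈ distTriang C)
    (h₁ : t.le n T.obj₁) (h₃ : t.le n T.obj₃) : t.le n T.obj₂ := by
  rw [LE_iff]
  intro Z hZ f
  have h1 : T.mor₁ ≫ f = 0 := zero_of_lt t (by omega) h₁ hZ _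
  obtain ⟨g, hg⟩ := Triangle.yoneda_exact₂ _ hT f h1
  rw [hg, zero_of_lt t (by omega) h₃ hZ g, comp_zero]

lemma GE_ext (n : ℤ) {T : Triangle C} (hT : T ∈ distTriang C)
    (h₁ : t.ge n T.obj₁) (h₃ : t.ge n T.obj₃) : t.ge n T.obj₂ := by
  rw [GE_iff]
  intro Z hZ f
  have h1 : f ≫ T.mor₂ = 0 := zero_of_lt t (by omega) hZ h₃ _
  obtain ⟨g, hg⟩ := Triangle.coyoneda_exact₂ _ hT f h1
  rw [hg, zero_of_lt t (by omega) hZ h₁ g, zero_comp]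

lemma adj_zero_iff (T X : C) :
    (∀ f : T ⟶ X⟦(-1 : ℤ)⟧, f = 0) ↔ (∀ g : T⟦(1 : ℤ)⟧ ⟶ X, g = 0) := by
  constructor
  · intro h g
    have h2 : (shiftShiftNeg T (1 : ℤ)).inv ≫ g⟦(-1 : ℤ)⟧' = 0 := h _
    have h3 : g⟦(-1 : ℤ)⟧' = 0 := by
      calc g⟦(-1 : ℤ)⟧' = (shiftShiftNeg T (1 : ℤ)).hom ≫
            ((shiftShiftNeg T (1 : ℤ)).inv ≫ g⟦(-1 : ℤ)⟧') := by rw [Iso.hom_inv_id_assoc]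
      _ = 0 := by rw [h2, comp_zero]
    apply (shiftFunctor C (-1 : ℤ)).map_injective
    rw [h3, Functor.map_zero]
  · intro h f
    have h2 : f⟦(1 : ℤ)⟧' ≫ (shiftNegShift X (1 : ℤ)).hom = 0 := h _
    have h3 : f⟦(1 : ℤ)⟧' = 0 := by
      calc f⟦(1 : ℤ)⟧' = (f⟦(1 : ℤ)⟧' ≫ (shiftNegShift X (1 : ℤ)).hom) ≫
            (shiftNegShift X (1 : ℤ)).inv := by
              rw [Category.assoc, Iso.hom_inv_id, Category.comp_id]
      _ = 0 := by rw [h2, zero_comp]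
    apply (shiftFunctor C (1 : ℤ)).map_injective
    rw [h3, Functor.map_zero]

variable {𝒯 𝒻 : C → Prop}

lemma mem_torsion (h𝒯iso : ∀ X Y : C, (X ≅ Y) → 𝒯 X → 𝒯 Y)
    (htp : IsTorsionPair C (heartP C t) 𝒯 𝒻) {E : C} (hE : heartP C t E)
    (h : ∀ F, 𝒻 F → ∀ f : E ⟶ F, f = 0) : 𝒯 E := by
  obtain ⟨T', F', hT', hF', u, vv, ww, hTr⟩ := htp.2.2.2 E hE
  have hv : vv = 0 := h F' hF' vv
  obtain ⟨r, hr⟩ := mk_yoneda_exact₃ hTr (𝟙 F') (by rw [hv, zero_comp])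
  have hr0 : r = 0 := zero_of_lt t (show (-1 : ℤ) < 0 by omega)
    (t.le_shift 0 1 (-1) (by omega) T' (htp.1 T' hT').1) (htp.2.1 F' hF').2 r
  have hzero : IsZero F' := by rw [IsZero.iff_id_eq_zero, hr, hr0, comp_zero]
  haveI : IsIso (Triangle.mk u vv ww).mor₁ := (Triangle.isZero₃_iff_isIso₁ _ hTr).1 hzero
  exact h𝒯iso T' E (@asIso _ _ _ _ (Triangle.mk u vv ww).mor₁ this) hT'

lemma mem_free (h𝒻iso : ∀ X Y : C, (X ≅ Y) → 𝒻 X → 𝒻 Y)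
    (htp : IsTorsionPair C (heartP C t) 𝒯 𝒻) {E : C} (hE : heartP C t E)
    (h : ∀ T, 𝒯 T → ∀ f : T ⟶ E, f = 0) : 𝒻 E := by
  obtain ⟨T', F', hT', hF', u, vv, ww, hTr⟩ := htp.2.2.2 E hE
  have hu : u = 0 := h T' hT' u
  obtain ⟨r, hr⟩ := mk_coyoneda_exact₁ hTr (𝟙 (T'⟦(1 : ℤ)⟧))
    (by rw [hu, Functor.map_zero, comp_zero])
  have hr0 : r = 0 := zero_of_lt t (show (-1 : ℤ) < 0 by omega)
    (t.le_shift 0 1 (-1) (by omega) T' (htp.1 T' hT').1) (htp.2.1 F' hF').2 r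
  have hzero : IsZero T' := by
    rw [IsZero.iff_id_eq_zero]
    apply (shiftFunctor C (1 : ℤ)).map_injective
    rw [CategoryTheory.Functor.map_id, Functor.map_zero, hr, hr0, zero_comp]
  haveI : IsIso (Triangle.mk u vv ww).mor₂ := (Triangle.isZero₁_iff_isIso₂ _ hTr).1 hzero
  exact h𝒻iso F' E (@asIso _ _ _ _ (Triangle.mk u vv ww).mor₂ this).symm hF'

/-- The tilted t-structure. -/
def tilted (h𝒯iso : ∀ X Y : C, (X ≅ Y) → 𝒯 X → 𝒯 Y)
    (h𝒻iso : ∀ X Y : C, (X ≅ Y) → 𝒻 X → 𝒻 Y)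
    (htp : IsTorsionPair C (heartP C t) 𝒯 𝒻) : TStructure C where
  le n X := t.le n X ∧ ∀ F, 𝒻 F → ∀ f : X⟦n⟧ ⟶ F, f = 0
  ge n X := t.ge (n - 1) X ∧ ∀ T, 𝒯 T → ∀ f : T ⟶ X⟦n - 1⟧, f = 0
  le_isClosedUnderIsomorphisms n := ⟨fun {X Y} e h => ⟨ObjectProperty.prop_of_iso _ e h.1,
    fun F hF f => zero_src_iso ((shiftFunctor C n).mapIso e) (h.2 F hF) f⟩⟩
  ge_isClosedUnderIsomorphisms n := ⟨fun {X Y} e h => ⟨ObjectProperty.prop_of_iso _ e h.1,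
    fun T hT f => zero_tgt_iso ((shiftFunctor C (n - 1)).mapIso e) (h.2 T hT) f⟩⟩
  le_shift n a n' hh X hX := ⟨t.le_shift n a n' hh X hX.1,
    fun F hF f => zero_src_iso ((shiftFunctorAdd' C a n' n hh).app X) (hX.2 F hF) f⟩
  ge_shift n a n' hh X hX := ⟨t.ge_shift (n - 1) a (n' - 1) (by omega) X hX.1,
    fun T hT f => zero_tgt_iso ((shiftFunctorAdd' C a (n' - 1) (n - 1) (by omega)).app X)
      (hX.2 T hT) f⟩
  le_zero_le X hX := ⟨t.le_zero_le X hX.1,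
    fun F hF f => zero_of_lt t (show (-1 : ℤ) < 0 by omega)
      (t.le_shift 0 1 (-1) (by omega) X hX.1) (htp.2.1 F hF).2 f⟩
  ge_one_le X hX := ⟨t.ge_antitone (show (0 : ℤ) - 1 ≤ 1 - 1 by omega) X hX.1,
    fun T hT f => zero_of_lt t (show (0 : ℤ) < 1 by omega) (htp.1 T hT).1
      (t.ge_shift (1 - 1) (0 - 1) 1 (by omega) X hX.1) f⟩
  zero' X Y f hX hY := by
    have hXF : ∀ F, 𝒻 F → ∀ g : X ⟶ F, g = 0 := fun F hF g =>
      zero_src_iso ((shiftFunctorZero C ℤ).app X) (hX.2 F hF) g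
    have hTY : ∀ T', 𝒯 T' → ∀ g : T' ⟶ Y, g = 0 := fun T' hT' g =>
      zero_tgt_iso ((shiftFunctorZero' C ((1 : ℤ) - 1) (by omega)).app Y) (hY.2 T' hT') g
    have hYG : t.ge 0 Y := by
      have := hY.1; rwa [show (1 : ℤ) - 1 = 0 by omega] at this
    -- truncate X
    obtain ⟨X₁, X₂, hX₁L, hX₂G, a₁, b₁, c₁, hTX⟩ := t.exists_triangle X (-1) 0 (by omega)
    have hX₂L : t.le 0 X₂ := LE_ext t 0 (rot_of_distTriang _ hTX) hX.1
      (t.le_monotone (show (-2 : ℤ) ≤ 0 by omega) _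
        (t.le_shift (-1) 1 (-2) (by omega) X₁ hX₁L))
    have hX₂𝒯 : 𝒯 X₂ := mem_torsion t h𝒯iso htp ⟨hX₂L, hX₂G⟩ (fun F hF α => by
      obtain ⟨r, hr⟩ := mk_yoneda_exact₃ hTX α (hXF F hF _)
      rw [hr, zero_of_lt t (show (-2 : ℤ) < 0 by omega)
        (t.le_shift (-1) 1 (-2) (by omega) X₁ hX₁L) (htp.2.1 F hF).2 r, comp_zero])
    -- truncate Y
    obtain ⟨Y₁, Y₂, hY₁L, hY₂G, a₂, b₂, c₂, hTY2⟩ := t.exists_triangle Y 0 1 rfl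
    have hY₁G : t.ge 0 Y₁ := GE_ext t 0 (inv_rot_of_distTriang _ hTY2)
      (t.ge_antitone (show (0 : ℤ) ≤ 2 by omega) _
        (t.ge_shift 1 (-1) 2 (by omega) Y₂ hY₂G)) hYG
    have hY₁𝒻 : 𝒻 Y₁ := mem_free t h𝒻iso htp ⟨hY₁L, hY₁G⟩ (fun T' hT' g => by
      obtain ⟨ξ, hξ⟩ := mk_invRotate_coyoneda_exact₂ hTY2 g
        (hTY T' hT' _)
      rw [hξ, zero_of_lt t (show (0 : ℤ) < 2 by omega) (htp.1 T' hT').1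
        (t.ge_shift 1 (-1) 2 (by omega) Y₂ hY₂G) ξ, zero_comp])
    -- conclude
    have h1 : f ≫ b₂ = 0 := zero_of_lt t (show (0 : ℤ) < 1 by omega) hX.1 hY₂G _
    obtain ⟨g₁, hg₁⟩ := mk_coyoneda_exact₂ hTY2 f h1
    have h2 : a₁ ≫ g₁ = 0 := zero_of_lt t (show (-1 : ℤ) < 0 by omega) hX₁L hY₁G _
    obtain ⟨g₂, hg₂⟩ := mk_yoneda_exact₂ hTX g₁ h2
    rw [hg₁, hg₂, htp.2.2.1 X₂ Y₁ hX₂𝒯 hY₁𝒻 g₂, comp_zero, zero_comp]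
  exists_triangle_zero_one A := by
    obtain ⟨A', A'', hA'L, hA''G, a, w, b, hTri1⟩ := t.exists_triangle A (-1) 0 (by omega)
    obtain ⟨B', B'', hB'L, hB''G, m, nn, e, hTri3⟩ := t.exists_triangle A'' 0 1 rfl
    have hB'G : t.ge 0 B' := GE_ext t 0 (inv_rot_of_distTriang _ hTri3)
      (t.ge_antitone (show (0 : ℤ) ≤ 2 by omega) _
        (t.ge_shift 1 (-1) 2 (by omega) B'' hB''G)) hA''G
    obtain ⟨T₀, F₀, hT₀, hF₀, i, p, hm, hTri2⟩ := htp.2.2.2 B' ⟨hB'L, hB'G⟩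
    obtain ⟨Y, q, δY, hTri4⟩ := Pretriangulated.distinguished_cocone_triangle (i ≫ m)
    -- orthogonality for Y
    have key : ∀ (W : C), (∀ g : W ⟶ F₀, g = 0) → (∀ g : W ⟶ B'', g = 0) →
        ∀ φ : W ⟶ Y, φ = 0 := by
      intro W hWF hWB φ
      have hψj : (φ ≫ δY) ≫ (i ≫ m)⟦(1 : ℤ)⟧' = 0 := by
        have hc := comp_distTriang_mor_zero₃₁ _ hTri4
        change δY ≫ (i ≫ m)⟦(1 : ℤ)⟧' = 0 at hc
        rw [Category.assoc, hc, comp_zero]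
      have hρ0 : ((φ ≫ δY) ≫ i⟦(1 : ℤ)⟧') ≫ m⟦(1 : ℤ)⟧' = 0 := by
        rw [Category.assoc, ← Functor.map_comp]; exact hψj
      obtain ⟨g, hg⟩ := mk_coyoneda_exact₁ hTri3 ((φ ≫ δY) ≫ i⟦(1 : ℤ)⟧') hρ0
      have hψi : (φ ≫ δY) ≫ i⟦(1 : ℤ)⟧' = 0 := by rw [hg, hWB g, zero_comp]
      obtain ⟨g', hg'⟩ := mk_coyoneda_exact₁ hTri2 (φ ≫ δY) hψi
      have hψ : φ ≫ δY = 0 := by rw [hg', hWF g', zero_comp]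
      obtain ⟨χ, hχ⟩ := mk_coyoneda_exact₃ hTri4 φ hψ
      obtain ⟨χ', hχ'⟩ := mk_coyoneda_exact₂ hTri3 χ (hWB _)
      obtain ⟨ξ, hξ⟩ := mk_coyoneda_exact₂ hTri2 χ' (hWF _)
      have h0 : i ≫ m ≫ q = 0 := by
        rw [← Category.assoc]
        exact comp_distTriang_mor_zero₁₂ _ hTri4
      rw [hχ, hχ', hξ]
      show ((ξ ≫ i) ≫ m) ≫ q = 0
      simp only [Category.assoc]
      rw [h0, comp_zero]
    have hYG : t.ge 0 Y := by
      rw [GE_iff]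
      intro Z hZ φ
      have hZL : t.le (-1) Z := by rwa [show (0 : ℤ) - 1 = -1 by omega] at hZ
      exact key Z (fun g => zero_of_lt t (show (-1 : ℤ) < 0 by omega) hZL (htp.2.1 F₀ hF₀).2 g)
        (fun g => zero_of_lt t (show (-1 : ℤ) < 1 by omega) hZL hB''G g) φ
    have hTY : ∀ T', 𝒯 T' → ∀ φ : T' ⟶ Y, φ = 0 := fun T' hT' φ =>
      key T' (fun g => htp.2.2.1 T' F₀ hT' hF₀ g)
        (fun g => zero_of_lt t (show (0 : ℤ) < 1 by omega) (htp.1 T' hT').1 hB''G g) φ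
    -- build X
    obtain ⟨W₀, g', h', hTri5'⟩ := Pretriangulated.distinguished_cocone_triangle (w ≫ q)
    have hTri5 := inv_rot_of_distTriang _ hTri5'
    have keyX : ∀ (Z : C), (∀ g : A' ⟶ Z, g = 0) → (∀ g : T₀ ⟶ Z, g = 0) →
        ∀ α : (W₀⟦(-1 : ℤ)⟧) ⟶ Z, α = 0 := by
      intro Z hZ1 hZ2 α
      set αt : W₀ ⟶ Z⟦(1 : ℤ)⟧ := (shiftNegShift W₀ (1 : ℤ)).inv ≫ α⟦(1 : ℤ)⟧' with hαt
      suffices hs : αt = 0 by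
        have h4 : α⟦(1 : ℤ)⟧' = 0 := by
          calc α⟦(1 : ℤ)⟧' = (shiftNegShift W₀ (1 : ℤ)).hom ≫ αt := by
                rw [hαt, Iso.hom_inv_id_assoc]
          _ = 0 := by rw [hs, comp_zero]
        apply (shiftFunctor C (1 : ℤ)).map_injective
        rw [h4, Functor.map_zero]
      have h0 : (w ≫ q) ≫ g' = 0 := comp_distTriang_mor_zero₁₂ _ hTri5'
      have hw : w ≫ q ≫ g' ≫ αt = 0 := by
        simp only [← Category.assoc]
        rw [h0, zero_comp]
      obtain ⟨γ₁, hγ₁⟩ := mk_yoneda_exact₃ hTri1 (q ≫ g' ≫ αt) hw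
      have hγ₁0 : γ₁ = 0 := by
        obtain ⟨γ₀, rfl⟩ := (shiftFunctor C (1 : ℤ)).map_surjective γ₁
        rw [hZ1 γ₀, Functor.map_zero]
      have hq : q ≫ g' ≫ αt = 0 := by rw [hγ₁, hγ₁0, comp_zero]
      obtain ⟨γ₂, hγ₂⟩ := mk_yoneda_exact₃ hTri4 (g' ≫ αt) hq
      have hγ₂0 : γ₂ = 0 := by
        obtain ⟨γ₀, rfl⟩ := (shiftFunctor C (1 : ℤ)).map_surjective γ₂
        rw [hZ2 γ₀, Functor.map_zero]
      have hgαt : g' ≫ αt = 0 := by rw [hγ₂, hγ₂0, comp_zero]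
      obtain ⟨γ₃, hγ₃⟩ := mk_yoneda_exact₃ hTri5' αt hgαt
      obtain ⟨γ₄, rfl⟩ := (shiftFunctor C (1 : ℤ)).map_surjective γ₃
      obtain ⟨γ₅, hγ₅⟩ := mk_yoneda_exact₂ hTri1 γ₄ (hZ1 _)
      obtain ⟨γ₆, hγ₆⟩ := mk_yoneda_exact₂ hTri4 γ₅ (hZ2 _)
      have hz : h' ≫ (w ≫ q)⟦(1 : ℤ)⟧' = 0 := comp_distTriang_mor_zero₃₁ _ hTri5'
      rw [hγ₃, hγ₅, hγ₆]
      show h' ≫ (shiftFunctor C (1 : ℤ)).map (w ≫ q ≫ γ₆) = 0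
      rw [show w ≫ q ≫ γ₆ = (w ≫ q) ≫ γ₆ by rw [Category.assoc], Functor.map_comp,
        ← Category.assoc, hz, zero_comp]
    have hXL : t.le 0 (W₀⟦(-1 : ℤ)⟧) := by
      rw [LE_iff]
      intro Z hZ α
      exact keyX Z (fun g => zero_of_lt t (show (-1 : ℤ) < 1 by omega) hA'L hZ g)
        (fun g => zero_of_lt t (show (0 : ℤ) < 1 by omega) (htp.1 T₀ hT₀).1 hZ g) α
    have hXF : ∀ F, 𝒻 F → ∀ α : (W₀⟦(-1 : ℤ)⟧) ⟶ F, α = 0 := fun F hF α =>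
      keyX F (fun g => zero_of_lt t (show (-1 : ℤ) < 0 by omega) hA'L (htp.2.1 F hF).2 g)
        (fun g => htp.2.2.1 T₀ F hT₀ hF g) α
    refine ⟨W₀⟦(-1 : ℤ)⟧, Y,
      ⟨hXL, fun F hF f => zero_src_iso ((shiftFunctorZero C ℤ).app (W₀⟦(-1 : ℤ)⟧)).symm
        (hXF F hF) f⟩,
      ⟨by rw [show (1 : ℤ) - 1 = 0 by omega]; exact hYG,
        fun T' hT' f => zero_tgt_iso
          ((shiftFunctorZero' C ((1 : ℤ) - 1) (by omega)).app Y).symm (hTY T' hT') f⟩,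
      (Triangle.mk (w ≫ q) g' h').invRotate.mor₁,
      (Triangle.mk (w ≫ q) g' h').invRotate.mor₂,
      (Triangle.mk (w ≫ q) g' h').invRotate.mor₃, hTri5⟩

end TiltAux

/-- If `(𝒯, 𝒻)` is a torsion pair in the heart of a bounded t-structure on `C`, then the
tilt `A♯` is again the heart of a bounded t-structure on `C`. -/


theorem tiltedHeart_is_heart_of_bounded_tStructure (t : TStructure C)
    (hbd : TStructureIsBounded C t) (𝒯 𝒻 : C → Prop)
    (h𝒯iso : ∀ X Y : C, (X ≅ Y) → 𝒯 X → 𝒯 Y) (h𝒻iso : ∀ X Y : C, (X ≅ Y) → 𝒻 X → 𝒻 Y)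
    (htp : IsTorsionPair C (heartP C t) 𝒯 𝒻) :
    ∃ t' : TStructure C, TStructureIsBounded C t' ∧
      ∀ X : C, heartP C t' X ↔ tiltedHeart C 𝒯 𝒻 X := by
  refine ⟨TiltAux.tilted t h𝒯iso h𝒻iso htp, ?_, ?_⟩
  · intro X
    obtain ⟨m, n, hLE, hGE⟩ := hbd X
    exact ⟨m, n + 1,
      ⟨t.le_monotone (by omega) X hLE,
        fun F hF f => TiltAux.zero_of_lt t (show (-1 : ℤ) < 0 by omega)
          (t.le_shift n (n + 1) (-1) (by omega) X hLE) (htp.2.1 F hF).2 f⟩,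
      ⟨t.ge_antitone (by omega) X hGE,
        fun T hT f => TiltAux.zero_of_lt t (show (0 : ℤ) < 1 by omega) (htp.1 T hT).1
          (t.ge_shift m (m - 1) 1 (by omega) X hGE) f⟩⟩
  · intro X
    constructor
    · rintro ⟨hL', hG'⟩
      have hL : t.le 0 X := hL'.1
      have hXF : ∀ F, 𝒻 F → ∀ f : X ⟶ F, f = 0 := fun F hF f =>
        TiltAux.zero_src_iso ((shiftFunctorZero C ℤ).app X) (hL'.2 F hF) f
      have hGm : t.ge (-1) X := by
        have := hG'.1
        rwa [show (0 : ℤ) - 1 = -1 by omega] at this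
      have hGT : ∀ T', 𝒯 T' → ∀ f : T' ⟶ X⟦(-1 : ℤ)⟧, f = 0 := fun T' hT' f =>
        TiltAux.zero_tgt_iso (TiltAux.shiftIso X (show (0 : ℤ) - 1 = -1 by omega))
          (hG'.2 T' hT') f
      have hT1X : ∀ T', 𝒯 T' → ∀ κ : T'⟦(1 : ℤ)⟧ ⟶ X, κ = 0 := fun T' hT' =>
        (TiltAux.adj_zero_iff T' X).1 (hGT T' hT')
      obtain ⟨X₁, X₂, hX₁L, hX₂G, a₁, b₁, c₁, hTr⟩ := t.exists_triangle X (-1) 0 (by omega)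
      have hX₂L : t.le 0 X₂ := TiltAux.LE_ext t 0 (rot_of_distTriang _ hTr) hL
        (t.le_monotone (show (-2 : ℤ) ≤ 0 by omega) _
          (t.le_shift (-1) 1 (-2) (by omega) X₁ hX₁L))
      have hX₂𝒯 : 𝒯 X₂ := TiltAux.mem_torsion t h𝒯iso htp ⟨hX₂L, hX₂G⟩ (fun F hF α => by
        obtain ⟨r, hr⟩ := TiltAux.mk_yoneda_exact₃ hTr α (hXF F hF _)
        rw [hr, TiltAux.zero_of_lt t (show (-2 : ℤ) < 0 by omega)
          (t.le_shift (-1) 1 (-2) (by omega) X₁ hX₁L) (htp.2.1 F hF).2 r, comp_zero])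
      have hX₁G : t.ge (-1) X₁ := TiltAux.GE_ext t (-1) (inv_rot_of_distTriang _ hTr)
        (t.ge_antitone (show (-1 : ℤ) ≤ 1 by omega) _
          (t.ge_shift 0 (-1) 1 (by omega) X₂ hX₂G)) hGm
      have hFheart : heartP C t (X₁⟦(-1 : ℤ)⟧) :=
        ⟨t.le_shift (-1) (-1) 0 (by omega) X₁ hX₁L,
          t.ge_shift (-1) (-1) 0 (by omega) X₁ hX₁G⟩
      have hF𝒻 : 𝒻 (X₁⟦(-1 : ℤ)⟧) := TiltAux.mem_free t h𝒻iso htp hFheart (fun T' hT' g =>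
        (TiltAux.adj_zero_iff T' X₁).2 (fun ζ => by
          have h1 : ζ ≫ (Triangle.mk a₁ b₁ c₁).invRotate.mor₂ = 0 := hT1X T' hT' _
          obtain ⟨ρ, hρ⟩ := TiltAux.mk_invRotate_coyoneda_exact₂ hTr ζ h1
          rw [hρ, TiltAux.zero_of_lt t (show (-1 : ℤ) < 1 by omega)
            (t.le_shift 0 1 (-1) (by omega) T' (htp.1 T' hT').1)
            (t.ge_shift 0 (-1) 1 (by omega) X₂ hX₂G) ρ, zero_comp]) g)
      refine ⟨X₁⟦(-1 : ℤ)⟧, X₂, hF𝒻, hX₂𝒯,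
        (shiftNegShift X₁ (1 : ℤ)).hom ≫ a₁, b₁,
        c₁ ≫ ((shiftNegShift X₁ (1 : ℤ)).inv)⟦(1 : ℤ)⟧', ?_⟩
      refine isomorphic_distinguished _ hTr _ ?_
      refine Triangle.isoMk _ _ (shiftNegShift X₁ (1 : ℤ)) (Iso.refl _) (Iso.refl _)
        ?_ ?_ ?_
      · dsimp; exact Category.comp_id _
      · dsimp; exact (Category.comp_id _).trans (Category.id_comp _).symm
      · dsimp
        exact (Category.assoc _ _ _).trans ((congrArg (c₁ ≫ ·)
          (((shiftFunctor C (1 : ℤ)).map_comp _ _).symm.trans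
            ((congrArg (shiftFunctor C (1 : ℤ)).map (Iso.inv_hom_id_app _ _)).trans
              ((shiftFunctor C (1 : ℤ)).map_id _)))).trans
          ((Category.comp_id _).trans (Category.id_comp _).symm))
    · rintro ⟨F, T, hF, hT, f, g, h, hTr⟩
      constructor
      · refine ⟨?_, ?_⟩
        · exact TiltAux.LE_ext t 0 hTr
            (t.le_monotone (show (-1 : ℤ) ≤ 0 by omega) _
              (t.le_shift 0 1 (-1) (by omega) F (htp.2.1 F hF).1)) (htp.1 T hT).1
        · intro F' hF' f'
          have hXF' : ∀ α : X ⟶ F', α = 0 := fun α => by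
            obtain ⟨β, hβ⟩ := TiltAux.mk_yoneda_exact₂ hTr α
              (TiltAux.zero_of_lt t (show (-1 : ℤ) < 0 by omega)
                (t.le_shift 0 1 (-1) (by omega) F (htp.2.1 F hF).1) (htp.2.1 F' hF').2 _)
            rw [hβ, htp.2.2.1 T F' hT hF' β, comp_zero]
          exact TiltAux.zero_src_iso ((shiftFunctorZero C ℤ).app X).symm hXF' f'
      · refine ⟨?_, ?_⟩
        · rw [show (0 : ℤ) - 1 = -1 by omega]
          exact TiltAux.GE_ext t (-1) hTr
            (t.ge_shift 0 1 (-1) (by omega) F (htp.2.1 F hF).2)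
            (t.ge_antitone (show (-1 : ℤ) ≤ 0 by omega) T (htp.1 T hT).2)
        · intro T' hT' f'
          have hκ : ∀ κ : T'⟦(1 : ℤ)⟧ ⟶ X, κ = 0 := fun κ => by
            obtain ⟨ξ, hξ⟩ := TiltAux.mk_coyoneda_exact₂ hTr κ
              (TiltAux.zero_of_lt t (show (-1 : ℤ) < 0 by omega)
                (t.le_shift 0 1 (-1) (by omega) T' (htp.1 T' hT').1) (htp.1 T hT).2 _)
            obtain ⟨ξ₀, rfl⟩ := (shiftFunctor C (1 : ℤ)).map_surjective ξ
            rw [hξ, htp.2.2.1 T' F hT' hF ξ₀, Functor.map_zero, zero_comp]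
          have hm1 : ∀ κ : T' ⟶ X⟦(-1 : ℤ)⟧, κ = 0 := (TiltAux.adj_zero_iff T' X).2 hκ
          exact TiltAux.zero_tgt_iso (TiltAux.shiftIso X (show (-1 : ℤ) = 0 - 1 by omega))
            hm1 f'
end

section
/- Let σ = (Z,P) be a stability condition on a triangulated category D whose central charge Z has discrete image in ℂ (i.e. the image of Z : K(D) → ℂ is a discrete subgroup), and fix 0 < ε < 1/2 and φ ∈ ℝ. Then the quasi-abelian category P((φ−ε,φ+ε)) is of finite length; concretely, there is no infinite sequence of distinguished triangles A_{n+1} → A_n → B_n → A_{n+1}[1] (n ≥ 0) with all A_n and all B_n nonzero objects of P((φ−ε,φ+ε)) (no infinite descending chain of strict subobjects), and there is no infinite sequence of distinguished triangles K_n → A_n → A_{n+1} → K_n[1] (n ≥ 0) with all A_n and all K_n nonzero objects of P((φ−ε,φ+ε)) (no infinite ascending chain of strict quotients). In particular σ is locally finite. -/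
/-!
STATEMENT 8: a stability condition with discrete central charge is locally finite:
each quasi-abelian category `P((φ-ε, φ+ε))` (`0 < ε < 1/2`) has finite length.
-/

open CategoryTheory CategoryTheory.Limits CategoryTheory.Pretriangulated
open CategoryTheory.Triangulated

universe v u

variable (C : Type u) [Category.{v} C] [HasZeroObject C] [HasShift C ℤ]
  [Preadditive C] [∀ n : ℤ, (CategoryTheory.shiftFunctor C n).Additive] [Pretriangulated C]

/-- The extension-closed full subcategory `P(I)` of `C` generated by the subcategories
`P(φ)` for `φ ∈ I`. -/
inductive PCat (P : ℝ → Set C) (I : Set ℝ) : C → Prop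
  | of (φ : ℝ) (hφ : φ ∈ I) (E : C) (hE : E ∈ P φ) : PCat P I E
  | zero (E : C) (hE : IsZero E) : PCat P I E
  | iso (E F : C) (e : E ≅ F) (hE : PCat P I E) : PCat P I F
  | ext (A E B : C) (f : A ⟶ E) (g : E ⟶ B) (h : B ⟶ A⟦(1 : ℤ)⟧)
      (hT : Triangle.mk f g h ∈ distTriang C) (hA : PCat P I A) (hB : PCat P I B) :
      PCat P I E


/-- There is no infinite descending chain of strict subobjects in `P(I)`: no infinite
sequence of distinguished triangles `A_{n+1} → A_n → B_n → A_{n+1}[1]` with all `A_n`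
and all `B_n` nonzero objects of `P(I)`. -/
def NoInfiniteDescendingChain (P : ℝ → Set C) (I : Set ℝ) : Prop :=
  ¬ ∃ (A B : ℕ → C) (f : ∀ n : ℕ, A (n + 1) ⟶ A n) (g : ∀ n : ℕ, A n ⟶ B n)
      (h : ∀ n : ℕ, B n ⟶ (A (n + 1))⟦(1 : ℤ)⟧),
    (∀ n : ℕ, Triangle.mk (f n) (g n) (h n) ∈ distTriang C) ∧
    (∀ n : ℕ, PCat C P I (A n)) ∧ (∀ n : ℕ, PCat C P I (B n)) ∧
    (∀ n : ℕ, ¬ IsZero (A n)) ∧ (∀ n : ℕ, ¬ IsZero (B n))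

/-- There is no infinite ascending chain of strict quotients in `P(I)`: no infinite
sequence of distinguished triangles `K_n → A_n → A_{n+1} → K_n[1]` with all `A_n`
and all `K_n` nonzero objects of `P(I)`. -/
def NoInfiniteAscendingChain (P : ℝ → Set C) (I : Set ℝ) : Prop :=
  ¬ ∃ (A K : ℕ → C) (f : ∀ n : ℕ, K n ⟶ A n) (g : ∀ n : ℕ, A n ⟶ A (n + 1))
      (h : ∀ n : ℕ, A (n + 1) ⟶ (K n)⟦(1 : ℤ)⟧),
    (∀ n : ℕ, Triangle.mk (f n) (g n) (h n) ∈ distTriang C) ∧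
    (∀ n : ℕ, PCat C P I (A n)) ∧ (∀ n : ℕ, PCat C P I (K n)) ∧
    (∀ n : ℕ, ¬ IsZero (A n)) ∧ (∀ n : ℕ, ¬ IsZero (K n))

/-- A stability condition is locally finite if for some `ε > 0` each quasi-abelian
category `P((φ-ε, φ+ε))` is of finite length. -/
def StabilityCondition.LocallyFinite (σ : StabilityCondition C) : Prop :=
  ∃ ε : ℝ, 0 < ε ∧ ∀ φ : ℝ,
    NoInfiniteDescendingChain C σ.P (Set.Ioo (φ - ε) (φ + ε)) ∧
    NoInfiniteAscendingChain C σ.P (Set.Ioo (φ - ε) (φ + ε))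


section Aux

open ZeroObject

variable {C}

/-- `Z` of the zero object is zero. -/
lemma StabilityCondition.Z_zero_obj (σ : StabilityCondition C) : σ.Z 0 = 0 := by
  have h := σ.additive _ (contractible_distinguished (0 : C))
  simp only [contractibleTriangle, Triangle.mk_obj₁, Triangle.mk_obj₂, Triangle.mk_obj₃] at h
  linear_combination -h

/-- `Z` is invariant under isomorphism. -/
lemma StabilityCondition.Z_iso (σ : StabilityCondition C) {A B : C} (e : A ≅ B) :
    σ.Z A = σ.Z B := by
  have hT : Triangle.mk e.hom (0 : B ⟶ 0) (0 : (0 : C) ⟶ A⟦(1 : ℤ)⟧) ∈ distTriang C := by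
    refine isomorphic_distinguished _ (contractible_distinguished A) _ ?_
    refine Triangle.isoMk _ _ (Iso.refl A) e.symm (Iso.refl 0) ?_ ?_ ?_
    · exact (e.hom_inv_id).trans (Category.comp_id _).symm
    · exact (Limits.zero_comp).trans (Limits.comp_zero).symm
    · exact (isZero_zero C).eq_of_src _ _
  have h := σ.additive _ hT
  simp only [Triangle.mk_obj₁, Triangle.mk_obj₂, Triangle.mk_obj₃] at h
  rw [σ.Z_zero_obj] at h
  rw [h, add_zero]

/-- `Z` of a zero object is zero. -/
lemma StabilityCondition.Z_isZero (σ : StabilityCondition C) {E : C} (hE : IsZero E) :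
    σ.Z E = 0 := by
  rw [σ.Z_iso (hE.iso (isZero_zero C))]
  exact σ.Z_zero_obj

/-- The key weight estimate, by induction on membership in `P((φ-ε,φ+ε))`. -/
lemma pcat_weight (σ : StabilityCondition C) {δ : ℝ} (hδ : 0 < δ)
    (hdisc : ∀ z ∈ AddSubgroup.closure (Set.range σ.Z), z ≠ 0 → δ ≤ ‖z‖)
    {ε : ℝ} (hε0 : 0 < ε) (hε : ε < 1 / 2) (φ : ℝ) {E : C}
    (hE : PCat C σ.P (Set.Ioo (φ - ε) (φ + ε)) E) :
    0 ≤ (σ.Z E * Complex.exp (-(↑Real.pi * ↑φ * Complex.I))).re ∧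
      (¬ IsZero E →
        δ * Real.cos (Real.pi * ε) ≤ (σ.Z E * Complex.exp (-(↑Real.pi * ↑φ * Complex.I))).re) := by
  have hπ : (0 : ℝ) < Real.pi := Real.pi_pos
  have hcos_pos : 0 < Real.cos (Real.pi * ε) := by
    apply Real.cos_pos_of_mem_Ioo
    constructor
    · nlinarith
    · nlinarith
  induction hE with
  | of ψ hψ E hEψ =>
    constructor
    · by_cases hz : IsZero E
      · rw [σ.Z_isZero hz]; simp
      · obtain ⟨m, hm, hZ⟩ := σ.central ψ E hEψ hz
        have key : (σ.Z E * Complex.exp (-(↑Real.pi * ↑φ * Complex.I))).re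
            = m * Real.cos (Real.pi * (ψ - φ)) := by
          rw [hZ, mul_assoc, ← Complex.exp_add]
          have : (↑Real.pi * ↑ψ * Complex.I + -(↑Real.pi * ↑φ * Complex.I))
              = ((Real.pi * (ψ - φ) : ℝ) : ℂ) * Complex.I := by push_cast; ring
          rw [this, Complex.re_ofReal_mul, Complex.exp_ofReal_mul_I_re]
        rw [key]
        have : 0 ≤ Real.cos (Real.pi * (ψ - φ)) := by
          rw [← Real.cos_abs]
          apply Real.cos_nonneg_of_mem_Icc
          constructor
          · have := abs_nonneg (Real.pi * (ψ - φ)); linarith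
          · rw [abs_mul, abs_of_pos hπ]
            have h1 : |ψ - φ| ≤ 1 / 2 := by
              rw [abs_le]
              obtain ⟨h2, h3⟩ := hψ
              constructor <;> linarith
            nlinarith
        positivity
    · intro hz
      obtain ⟨m, hm, hZ⟩ := σ.central ψ E hEψ hz
      have key : (σ.Z E * Complex.exp (-(↑Real.pi * ↑φ * Complex.I))).re
          = m * Real.cos (Real.pi * (ψ - φ)) := by
        rw [hZ, mul_assoc, ← Complex.exp_add]
        have : (↑Real.pi * ↑ψ * Complex.I + -(↑Real.pi * ↑φ * Complex.I))
            = ((Real.pi * (ψ - φ) : ℝ) : ℂ) * Complex.I := by push_cast; ring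
        rw [this, Complex.re_ofReal_mul, Complex.exp_ofReal_mul_I_re]
      rw [key]
      have hδm : δ ≤ m := by
        have hmem : σ.Z E ∈ AddSubgroup.closure (Set.range σ.Z) :=
          AddSubgroup.subset_closure ⟨E, rfl⟩
        have hne : σ.Z E ≠ 0 := by
          rw [hZ]
          exact mul_ne_zero (by exact_mod_cast hm.ne') (Complex.exp_ne_zero _)
        have habs : ‖σ.Z E‖ = m := by
          rw [hZ, norm_mul, Complex.norm_real, Real.norm_eq_abs, abs_of_pos hm]
          have : (↑Real.pi * ↑ψ * Complex.I : ℂ) = ((Real.pi * ψ : ℝ) : ℂ) * Complex.I := by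
            push_cast; ring
          rw [this, Complex.norm_exp_ofReal_mul_I, mul_one]
        have := hdisc _ hmem hne
        rwa [habs] at this
      have hcc : Real.cos (Real.pi * ε) ≤ Real.cos (Real.pi * (ψ - φ)) := by
        rw [← Real.cos_abs (Real.pi * (ψ - φ))]
        apply Real.cos_le_cos_of_nonneg_of_le_pi (abs_nonneg _)
        · nlinarith
        · rw [abs_mul, abs_of_pos hπ]
          have h1 : |ψ - φ| ≤ ε := by
            rw [abs_le]
            obtain ⟨h2, h3⟩ := hψ
            constructor <;> linarith
          nlinarith
      nlinarith
  | zero E hE =>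
    rw [σ.Z_isZero hE]
    simp
    intro h; exact absurd hE h
  | iso E F e hE ih =>
    rw [← σ.Z_iso e]
    exact ⟨ih.1, fun hF => ih.2 (fun hzE => hF (hzE.of_iso e.symm))⟩
  | ext A E B f g h hT hA hB ihA ihB =>
    have hadd := σ.additive _ hT
    simp only [Triangle.mk_obj₁, Triangle.mk_obj₂, Triangle.mk_obj₃] at hadd
    have key : (σ.Z E * Complex.exp (-(↑Real.pi * ↑φ * Complex.I))).re
        = (σ.Z A * Complex.exp (-(↑Real.pi * ↑φ * Complex.I))).re
          + (σ.Z B * Complex.exp (-(↑Real.pi * ↑φ * Complex.I))).re := by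
      rw [hadd, add_mul, Complex.add_re]
    rw [key]
    refine ⟨by linarith [ihA.1, ihB.1], fun hzE => ?_⟩
    by_cases hzA : IsZero A
    · by_cases hzB : IsZero B
      · exact absurd (Triangle.isZero₂_of_isZero₁₃ _ hT hzA hzB) hzE
      · linarith [ihA.1, ihB.2 hzB]
    · linarith [ihA.2 hzA, ihB.1]

/-- A purely arithmetic lemma: no infinite strictly decreasing chain of nonnegative
reals with steps bounded below. -/
lemma no_chain_aux {c : ℝ} (hc : 0 < c) (a b : ℕ → ℝ)
    (h : ∀ n, a n = a (n + 1) + b n) (hb : ∀ n, c ≤ b n) (ha : ∀ n, 0 ≤ a n) : False := by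
  have key : ∀ n : ℕ, a n + n * c ≤ a 0 := by
    intro n
    induction n with
    | zero => simp
    | succ n ih =>
      have h1 := h n
      have h2 := hb n
      push_cast
      push_cast at ih
      linarith
  obtain ⟨n, hn⟩ := exists_nat_gt (a 0 / c)
  have h1 := key n
  have h2 := ha n
  have h3 : a 0 < n * c := (div_lt_iff₀ hc).mp hn
  linarith

end Aux

/-- Lemma 4.5 of the paper: if `σ = (Z,P)` is a stability condition whose central charge
has discrete image (the image of `Z : K(C) → ℂ`, i.e. the subgroup of `ℂ` generated by
the `Z`-values of objects, is a discrete subgroup), then for any `0 < ε < 1/2` and any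
`φ ∈ ℝ` the quasi-abelian category `P((φ-ε, φ+ε))` is of finite length; in particular
`σ` is locally finite. -/
theorem discrete_stabilityCondition_locally_finite (σ : StabilityCondition C)
    (hdisc : ∃ δ : ℝ, 0 < δ ∧ ∀ z ∈ AddSubgroup.closure (Set.range σ.Z),
      z ≠ 0 → δ ≤ ‖z‖)
    (ε : ℝ) (hε0 : 0 < ε) (hε : ε < 1 / 2) (φ : ℝ) :
    NoInfiniteDescendingChain C σ.P (Set.Ioo (φ - ε) (φ + ε)) ∧
    NoInfiniteAscendingChain C σ.P (Set.Ioo (φ - ε) (φ + ε)) ∧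
    σ.LocallyFinite C := by
  obtain ⟨δ, hδ, hdisc⟩ := hdisc
  have main : ∀ ψ : ℝ,
      NoInfiniteDescendingChain C σ.P (Set.Ioo (ψ - ε) (ψ + ε)) ∧
      NoInfiniteAscendingChain C σ.P (Set.Ioo (ψ - ε) (ψ + ε)) := by
    intro ψ
    have hπ : (0 : ℝ) < Real.pi := Real.pi_pos
    have hcos_pos : 0 < Real.cos (Real.pi * ε) := by
      apply Real.cos_pos_of_mem_Ioo
      constructor <;> nlinarith
    have hc : 0 < δ * Real.cos (Real.pi * ε) := by positivity
    set c := δ * Real.cos (Real.pi * ε) with hcdef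
    set w : C → ℝ := fun E => (σ.Z E * Complex.exp (-(↑Real.pi * ↑ψ * Complex.I))).re with hw
    constructor
    · rintro ⟨A, B, f, g, h, hT, hAP, hBP, hAnz, hBnz⟩
      refine no_chain_aux hc (fun n => w (A n)) (fun n => w (B n)) (fun n => ?_)
        (fun n => (pcat_weight σ hδ hdisc hε0 hε ψ (hBP n)).2 (hBnz n))
        (fun n => (pcat_weight σ hδ hdisc hε0 hε ψ (hAP n)).1)
      have hadd := σ.additive _ (hT n)
      simp only [Triangle.mk_obj₁, Triangle.mk_obj₂, Triangle.mk_obj₃] at hadd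
      simp only [hw]
      rw [hadd, add_mul, Complex.add_re]
    · rintro ⟨A, K, f, g, h, hT, hAP, hKP, hAnz, hKnz⟩
      refine no_chain_aux hc (fun n => w (A n)) (fun n => w (K n)) (fun n => ?_)
        (fun n => (pcat_weight σ hδ hdisc hε0 hε ψ (hKP n)).2 (hKnz n))
        (fun n => (pcat_weight σ hδ hdisc hε0 hε ψ (hAP n)).1)
      have hadd := σ.additive _ (hT n)
      simp only [Triangle.mk_obj₁, Triangle.mk_obj₂, Triangle.mk_obj₃] at hadd
      simp only [hw]
      rw [hadd, add_mul, Complex.add_re]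
      ring
  exact ⟨(main φ).1, (main φ).2, ⟨ε, hε0, main⟩⟩
end

section
/- Let N be a free ℤ-module of finite rank n ≥ 2 with a symmetric bilinear form (−,−) whose ℝ-linear extension to N ⊗ ℝ is nondegenerate of signature (2, n−2), extended ℂ-bilinearly to N ⊗ ℂ, and let ‖·‖ be any norm on the finite-dimensional vector space N ⊗ ℂ. Suppose Ω ∈ N ⊗ ℂ is a vector whose real and imaginary parts span a positive definite two-plane in N ⊗ ℝ. Then there is a constant r > 0 (depending on Ω) such that |(u,v)| ≤ r·‖u‖·|(Ω,v)| for all u ∈ N ⊗ ℂ and all v ∈ N ⊗ ℝ with (v,v) ≥ 0. -/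
/-!
STATEMENT 9 (Lemma 6.2 of the paper, first part): a uniform bound `|(u,v)| ≤ r‖u‖|(Ω,v)|`
for vectors `v` with `(v,v) ≥ 0`, where `Ω` spans a positive definite two-plane.

The free ℤ-module `N` of rank `n` is realised as `Fin n → ℤ`, with `N ⊗ ℝ = Fin n → ℝ`
and `N ⊗ ℂ = Fin n → ℂ`; the symmetric bilinear form is given by an integer matrix `M`,
extended ℝ- and ℂ-bilinearly.
-/

open scoped BigOperators

noncomputable section

/-- The ℝ-bilinear extension of the form given by the integer matrix `M`. -/
def bR {n : ℕ} (M : Matrix (Fin n) (Fin n) ℤ) (u v : Fin n → ℝ) : ℝ :=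
  ∑ i, ∑ j, (M i j : ℝ) * u i * v j

/-- The ℂ-bilinear extension of the form given by the integer matrix `M`. -/
def bC {n : ℕ} (M : Matrix (Fin n) (Fin n) ℤ) (u v : Fin n → ℂ) : ℂ :=
  ∑ i, ∑ j, (M i j : ℂ) * u i * v j

/-- The inclusion `N ⊗ ℝ → N ⊗ ℂ`. -/
def toC {n : ℕ} (v : Fin n → ℝ) : Fin n → ℂ := fun i => (v i : ℂ)

/-- The real part of a vector in `N ⊗ ℂ`, as a vector in `N ⊗ ℝ`. -/
def reOf {n : ℕ} (u : Fin n → ℂ) : Fin n → ℝ := fun i => (u i).re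

/-- The imaginary part of a vector in `N ⊗ ℂ`, as a vector in `N ⊗ ℝ`. -/
def imOf {n : ℕ} (u : Fin n → ℂ) : Fin n → ℝ := fun i => (u i).im

namespace BoundAux

variable {n : ℕ}

/-- `bR` as a bilinear map. -/
def bRL (M : Matrix (Fin n) (Fin n) ℤ) : (Fin n → ℝ) →ₗ[ℝ] (Fin n → ℝ) →ₗ[ℝ] ℝ :=
  LinearMap.mk₂ ℝ (bR M)
    (fun m₁ m₂ v => by
      simp only [bR, Pi.add_apply, ← Finset.sum_add_distrib]
      exact Finset.sum_congr rfl fun i _ => Finset.sum_congr rfl fun j _ => by ring)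
    (fun c m v => by
      simp only [bR, Pi.smul_apply, smul_eq_mul, Finset.mul_sum]
      exact Finset.sum_congr rfl fun i _ => Finset.sum_congr rfl fun j _ => by ring)
    (fun m v₁ v₂ => by
      simp only [bR, Pi.add_apply, ← Finset.sum_add_distrib]
      exact Finset.sum_congr rfl fun i _ => Finset.sum_congr rfl fun j _ => by ring)
    (fun c m v => by
      simp only [bR, Pi.smul_apply, smul_eq_mul, Finset.mul_sum]
      exact Finset.sum_congr rfl fun i _ => Finset.sum_congr rfl fun j _ => by ring)

lemma bR_eq (M : Matrix (Fin n) (Fin n) ℤ) (u v : Fin n → ℝ) : bR M u v = bRL M u v := rfl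

lemma bR_add_left (M : Matrix (Fin n) (Fin n) ℤ) (x y v : Fin n → ℝ) :
    bR M (x + y) v = bR M x v + bR M y v := by
  simp only [bR_eq]; rw [map_add, LinearMap.add_apply]

lemma bR_smul_left (M : Matrix (Fin n) (Fin n) ℤ) (c : ℝ) (x v : Fin n → ℝ) :
    bR M (c • x) v = c * bR M x v := by
  simp only [bR_eq]; rw [map_smul, LinearMap.smul_apply, smul_eq_mul]

lemma bR_add_right (M : Matrix (Fin n) (Fin n) ℤ) (x y z : Fin n → ℝ) :
    bR M x (y + z) = bR M x y + bR M x z := by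
  simp only [bR_eq]; rw [map_add]

lemma bR_smul_right (M : Matrix (Fin n) (Fin n) ℤ) (c : ℝ) (x v : Fin n → ℝ) :
    bR M x (c • v) = c * bR M x v := by
  simp only [bR_eq]; rw [map_smul, smul_eq_mul]

lemma bR_zero_left (M : Matrix (Fin n) (Fin n) ℤ) (v : Fin n → ℝ) :
    bR M 0 v = 0 := by
  simp only [bR_eq]; rw [map_zero, LinearMap.zero_apply]

lemma bR_symm (M : Matrix (Fin n) (Fin n) ℤ) (hsymm : ∀ i j, M i j = M j i)
    (u v : Fin n → ℝ) : bR M u v = bR M v u := by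
  rw [bR, Finset.sum_comm]
  refine Finset.sum_congr rfl fun i _ => Finset.sum_congr rfl fun j _ => ?_
  rw [hsymm j i]; ring

lemma bR_repr (M : Matrix (Fin n) (Fin n) ℤ) (e : Module.Basis (Fin n) ℝ (Fin n → ℝ))
    (w : Fin n → ℝ) :
    bR M w w = ∑ i, ∑ j, e.repr w i * e.repr w j * bR M (e i) (e j) := by
  conv_lhs => rw [show w = ∑ i, e.repr w i • e i from (e.sum_repr w).symm]
  simp only [bR_eq, map_sum, LinearMap.sum_apply, map_smul, LinearMap.smul_apply,
    smul_eq_mul, Finset.mul_sum]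
  conv_rhs => rw [Finset.sum_comm]
  refine Finset.sum_congr rfl fun i _ => Finset.sum_congr rfl fun j _ => ?_
  ring

lemma bC_re (M : Matrix (Fin n) (Fin n) ℤ) (u : Fin n → ℂ) (v : Fin n → ℝ) :
    (bC M u (toC v)).re = bR M (reOf u) v := by
  rw [bC, bR, Complex.re_sum]
  refine Finset.sum_congr rfl fun i _ => ?_
  rw [Complex.re_sum]
  refine Finset.sum_congr rfl fun j _ => ?_
  simp [toC, reOf, Complex.mul_re]

lemma bC_im (M : Matrix (Fin n) (Fin n) ℤ) (u : Fin n → ℂ) (v : Fin n → ℝ) :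
    (bC M u (toC v)).im = bR M (imOf u) v := by
  rw [bC, bR, Complex.im_sum]
  refine Finset.sum_congr rfl fun i _ => ?_
  rw [Complex.im_sum]
  refine Finset.sum_congr rfl fun j _ => ?_
  simp [toC, imOf, Complex.mul_im]

lemma bC_smul_right (M : Matrix (Fin n) (Fin n) ℤ) (u : Fin n → ℂ) (r : ℝ) (v : Fin n → ℝ) :
    bC M u (toC (r • v)) = (r : ℂ) * bC M u (toC v) := by
  simp only [bC, toC, Pi.smul_apply, smul_eq_mul, Complex.ofReal_mul, Finset.mul_sum]
  exact Finset.sum_congr rfl fun i _ => Finset.sum_congr rfl fun j _ => by ring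

lemma toC_zero : toC (0 : Fin n → ℝ) = 0 := by
  funext i; simp [toC]

lemma bC_zero_right (M : Matrix (Fin n) (Fin n) ℤ) (u : Fin n → ℂ) :
    bC M u 0 = 0 := by
  simp [bC]

/-- The key nonvanishing lemma. -/
lemma key (hn : 2 ≤ n) (M : Matrix (Fin n) (Fin n) ℤ) (hsymm : ∀ i j, M i j = M j i)
    (e : Module.Basis (Fin n) ℝ (Fin n → ℝ))
    (he : ∀ i j, bR M (e i) (e j) =
      if i = j then (if (i : ℕ) < 2 then 1 else -1) else 0)
    (Ω : Fin n → ℂ)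
    (hΩ : ∀ a b : ℝ, ¬ (a = 0 ∧ b = 0) →
      0 < bR M (a • reOf Ω + b • imOf Ω) (a • reOf Ω + b • imOf Ω))
    (v : Fin n → ℝ) (hv : v ≠ 0) (hvv : 0 ≤ bR M v v) :
    bC M Ω (toC v) ≠ 0 := by
  intro h0
  have h1 : bR M (reOf Ω) v = 0 := by
    have := congrArg Complex.re h0
    rwa [bC_re, Complex.zero_re] at this
  have h2 : bR M (imOf Ω) v = 0 := by
    have := congrArg Complex.im h0
    rwa [bC_im, Complex.zero_im] at this
  -- three vectors in ℝ², linearly dependent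
  set x : Fin 3 → (Fin n → ℝ) := ![reOf Ω, imOf Ω, v] with hx
  set f : Fin 3 → (Fin 2 → ℝ) := fun k j => e.repr (x k) (Fin.castLE hn j) with hf
  have hnli : ¬ LinearIndependent ℝ f := by
    intro h
    have hle := h.fintype_card_le_finrank
    have : Module.finrank ℝ (Fin 2 → ℝ) = 2 := by simp
    rw [this] at hle
    simp at hle
  obtain ⟨g, hg0, k0, hk0⟩ := Fintype.not_linearIndependent_iff.mp hnli
  set w : Fin n → ℝ := g 0 • reOf Ω + g 1 • imOf Ω + g 2 • v with hw
  have hcoord : ∀ j : Fin 2, e.repr w (Fin.castLE hn j) = 0 := by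
    intro j
    have h := congrFun hg0 j
    simp only [Finset.sum_apply, Pi.smul_apply, Pi.zero_apply, Fin.sum_univ_three,
      smul_eq_mul, hf] at h
    simp only [hw, map_add, map_smul, Finsupp.add_apply, Finsupp.smul_apply, smul_eq_mul]
    simpa [hx] using h
  have hcoord2 : ∀ i : Fin n, (i : ℕ) < 2 → e.repr w i = 0 := by
    intro i hi
    have := hcoord ⟨(i : ℕ), hi⟩
    convert this using 2
    exact Fin.ext rfl
  have hrepr : bR M w w = ∑ i, e.repr w i * e.repr w i *
      (if (i : ℕ) < 2 then 1 else -1) := by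
    rw [bR_repr M e w]
    refine Finset.sum_congr rfl fun i _ => ?_
    rw [Finset.sum_eq_single i]
    · rw [he]; simp
    · intro j _ hj
      rw [he]; simp [Ne.symm hj]
    · simp
  have hterm : ∀ i : Fin n, e.repr w i * e.repr w i *
      (if (i : ℕ) < 2 then 1 else -1) ≤ 0 := by
    intro i
    by_cases hi : (i : ℕ) < 2
    · rw [hcoord2 i hi]; simp
    · rw [if_neg hi]
      nlinarith [mul_self_nonneg (e.repr w i)]
  have hle : bR M w w ≤ 0 := by
    rw [hrepr]; exact Finset.sum_nonpos fun i _ => hterm i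
  have heqzero : bR M w w = 0 → w = 0 := by
    intro hz
    have hall := (Finset.sum_eq_zero_iff_of_nonpos fun i _ => hterm i).mp (by rw [← hrepr]; exact hz)
    have : e.repr w = 0 := by
      ext i
      by_cases hi : (i : ℕ) < 2
      · exact hcoord2 i hi
      · have h := hall i (Finset.mem_univ i)
        rw [if_neg hi] at h
        have h2 : e.repr w i * e.repr w i = 0 := by linarith
        exact mul_self_eq_zero.mp h2
    exact (LinearEquiv.map_eq_zero_iff e.repr).mp this
  -- the expansion
  set p : Fin n → ℝ := g 0 • reOf Ω + g 1 • imOf Ω with hp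
  have hpv : bR M p v = 0 := by
    rw [hp, bR_add_left, bR_smul_left, bR_smul_left, h1, h2]
    ring
  have hvp : bR M v p = 0 := by rw [bR_symm M hsymm]; exact hpv
  have hexp : bR M w w = bR M p p + g 2 * g 2 * bR M v v := by
    have hwp : w = p + g 2 • v := by rw [hw, hp]
    rw [hwp]
    simp only [bR_add_left, bR_add_right, bR_smul_left, bR_smul_right, hpv, hvp]
    ring
  by_cases hab : g 0 = 0 ∧ g 1 = 0
  · obtain ⟨ha, hb⟩ := hab
    have hc : g 2 ≠ 0 := by
      fin_cases k0
      · exact absurd ha hk0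
      · exact absurd hb hk0
      · exact hk0
    have hpp : p = 0 := by rw [hp, ha, hb]; simp
    have hwz : bR M w w = g 2 * g 2 * bR M v v := by
      rw [hexp, hpp, bR_zero_left]
      ring
    have hge : 0 ≤ bR M w w := by
      rw [hwz]; exact mul_nonneg (mul_self_nonneg _) hvv
    have hwzero : w = 0 := heqzero (le_antisymm hle hge)
    have : g 2 • v = 0 := by
      rw [hw, hpp] at hwzero; simpa using hwzero
    exact hv (by
      have := smul_eq_zero.mp this
      rcases this with h | h
      · exact absurd h hc
      · exact h)
  · have hpp : 0 < bR M p p := hΩ (g 0) (g 1) hab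
    have : 0 < bR M w w := by
      rw [hexp]
      have := mul_nonneg (mul_self_nonneg (g 2)) hvv
      linarith
    linarith

end BoundAux

theorem bound_on_positive_cone {n : ℕ} (hn : 2 ≤ n)
    (M : Matrix (Fin n) (Fin n) ℤ) (hsymm : ∀ i j, M i j = M j i)
    -- the real extension of the form is nondegenerate of signature (2, n-2):
    (e : Module.Basis (Fin n) ℝ (Fin n → ℝ))
    (he : ∀ i j, bR M (e i) (e j) =
      if i = j then (if (i : ℕ) < 2 then 1 else -1) else 0)
    -- an arbitrary norm on the finite-dimensional complex vector space `N ⊗ ℂ`: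
    (nrm : Seminorm ℂ (Fin n → ℂ)) (hnrm : ∀ u : Fin n → ℂ, nrm u = 0 → u = 0)
    -- `Ω` spans a positive definite two-plane in `N ⊗ ℝ`:
    (Ω : Fin n → ℂ)
    (hΩ : ∀ a b : ℝ, ¬ (a = 0 ∧ b = 0) →
      0 < bR M (a • reOf Ω + b • imOf Ω) (a • reOf Ω + b • imOf Ω)) :
    ∃ r : ℝ, 0 < r ∧ ∀ (u : Fin n → ℂ) (v : Fin n → ℝ), 0 ≤ bR M v v →
      ‖bC M u (toC v)‖ ≤ r * nrm u * ‖bC M Ω (toC v)‖ := by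
  haveI : Nonempty (Fin n) := ⟨⟨0, by omega⟩⟩
  -- upper bound for nrm by the sup norm
  obtain ⟨C1, hC1pos, hC1⟩ : ∃ C1 : ℝ, 0 < C1 ∧ ∀ u : Fin n → ℂ, nrm u ≤ C1 * ‖u‖ := by
    refine ⟨(∑ i, nrm (Pi.single i 1)) + 1, by positivity, fun u => ?_⟩
    have h1 : nrm u ≤ ∑ i, nrm (Pi.single i (u i)) := by
      conv_lhs => rw [show u = ∑ i, Pi.single i (u i) from (Finset.univ_sum_single u).symm]
      exact Finset.le_sum_of_subadditive _ (map_zero nrm).le (map_add_le_add nrm) _ _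
    have h2 : ∀ i, nrm (Pi.single i (u i)) ≤ ‖u‖ * nrm (Pi.single i 1) := by
      intro i
      have : Pi.single i (u i) = u i • (Pi.single i (1 : ℂ) : Fin n → ℂ) := by
        funext k
        by_cases hk : k = i
        · subst hk; simp
        · simp [Pi.single_eq_of_ne hk]
      rw [this, map_smul_eq_mul]
      exact mul_le_mul_of_nonneg_right (norm_le_pi_norm u i) (apply_nonneg nrm _)
    calc nrm u ≤ ∑ i, nrm (Pi.single i (u i)) := h1
      _ ≤ ∑ i, ‖u‖ * nrm (Pi.single i 1) := Finset.sum_le_sum fun i _ => h2 i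
      _ = (∑ i, nrm (Pi.single i 1)) * ‖u‖ := by rw [← Finset.mul_sum, mul_comm]
      _ ≤ ((∑ i, nrm (Pi.single i 1)) + 1) * ‖u‖ := by
          have := norm_nonneg u
          nlinarith
  -- nrm is continuous
  have hcont : Continuous fun u : Fin n → ℂ => (nrm u : ℝ) := by
    refine (LipschitzWith.of_dist_le_mul (K := ⟨C1, le_of_lt hC1pos⟩) fun x y => ?_).continuous
    rw [Real.dist_eq, dist_eq_norm]
    calc |nrm x - nrm y| ≤ nrm (x - y) := abs_sub_map_le_sub nrm x y
      _ ≤ C1 * ‖x - y‖ := hC1 _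
  -- lower bound for nrm
  obtain ⟨c, hcpos, hclow⟩ : ∃ c : ℝ, 0 < c ∧ ∀ u : Fin n → ℂ, c * ‖u‖ ≤ nrm u := by
    have hSne : (Metric.sphere (0 : Fin n → ℂ) 1).Nonempty :=
      NormedSpace.sphere_nonempty.mpr zero_le_one
    obtain ⟨u0, hu0S, hu0min⟩ :=
      (isCompact_sphere (0 : Fin n → ℂ) 1).exists_isMinOn hSne hcont.continuousOn
    have hu0norm : ‖u0‖ = 1 := by simpa using hu0S
    have hcpos : 0 < nrm u0 := by
      rcases (apply_nonneg nrm u0).lt_or_eq with h | h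
      · exact h
      · exfalso
        have : u0 = 0 := hnrm u0 h.symm
        rw [this] at hu0norm; simp at hu0norm
    refine ⟨nrm u0, hcpos, fun u => ?_⟩
    by_cases hu : u = 0
    · simp [hu]
    · have hnu : (0:ℝ) < ‖u‖ := norm_pos_iff.mpr hu
      set t : ℂ := ((‖u‖⁻¹ : ℝ) : ℂ) with ht
      have htS : t • u ∈ Metric.sphere (0 : Fin n → ℂ) 1 := by
        rw [mem_sphere_zero_iff_norm, norm_smul, ht]
        rw [Complex.norm_real, Real.norm_eq_abs, abs_of_nonneg (by positivity)]
        field_simp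
      have h2 : nrm u0 ≤ ‖u‖⁻¹ * nrm u := by
        have := hu0min htS
        simp only [Set.mem_setOf_eq] at this
        calc nrm u0 ≤ nrm (t • u) := this
          _ = ‖t‖ * nrm u := map_smul_eq_mul nrm t u
          _ = ‖u‖⁻¹ * nrm u := by
              rw [ht, Complex.norm_real, Real.norm_eq_abs, abs_of_nonneg (by positivity)]
      calc nrm u0 * ‖u‖ ≤ (‖u‖⁻¹ * nrm u) * ‖u‖ :=
            mul_le_mul_of_nonneg_right h2 (norm_nonneg u)
        _ = nrm u := by field_simp
  -- continuity of the denominator and of bR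
  have hbCcont : Continuous fun v : Fin n → ℝ => bC M Ω (toC v) := by
    apply continuous_finset_sum; intro i _
    apply continuous_finset_sum; intro j _
    exact continuous_const.mul (Complex.continuous_ofReal.comp (continuous_apply j))
  have hgcont : Continuous fun v : Fin n → ℝ => ‖bC M Ω (toC v)‖ :=
    continuous_norm.comp hbCcont
  have hbRcont : Continuous fun v : Fin n → ℝ => bR M v v := by
    apply continuous_finset_sum; intro i _
    apply continuous_finset_sum; intro j _
    exact (continuous_const.mul (continuous_apply i)).mul (continuous_apply j)
  -- the compact set K
  set K : Set (Fin n → ℝ) := Metric.sphere (0 : Fin n → ℝ) 1 ∩ {v | 0 ≤ bR M v v} with hK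
  have hKcompact : IsCompact K :=
    (isCompact_sphere (0 : Fin n → ℝ) 1).inter_right (isClosed_le continuous_const hbRcont)
  have hKne : K.Nonempty := by
    set i0 : Fin n := ⟨0, by omega⟩ with hi0
    have hne : e i0 ≠ 0 := e.ne_zero i0
    have hnorm : (0:ℝ) < ‖e i0‖ := norm_pos_iff.mpr hne
    refine ⟨‖e i0‖⁻¹ • e i0, ?_, ?_⟩
    · rw [mem_sphere_zero_iff_norm, norm_smul, Real.norm_eq_abs,
        abs_of_nonneg (by positivity)]
      field_simp
    · show 0 ≤ bR M (‖e i0‖⁻¹ • e i0) (‖e i0‖⁻¹ • e i0)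
      have : bR M (‖e i0‖⁻¹ • e i0) (‖e i0‖⁻¹ • e i0)
          = ‖e i0‖⁻¹ * (‖e i0‖⁻¹ * bR M (e i0) (e i0)) := by
        rw [BoundAux.bR_smul_left, BoundAux.bR_smul_right]
      rw [this, he i0 i0]
      simp [hi0]
      positivity
  obtain ⟨v0, hv0K, hv0min⟩ := hKcompact.exists_isMinOn hKne hgcont.continuousOn
  have hd : 0 < ‖bC M Ω (toC v0)‖ := by
    have hv0ne : v0 ≠ 0 := by
      intro h
      have := hv0K.1
      rw [h] at this
      simp at this
    have := BoundAux.key hn M hsymm e he Ω hΩ v0 hv0ne hv0K.2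
    exact norm_pos_iff.mpr this
  set d : ℝ := ‖bC M Ω (toC v0)‖ with hdd
  -- lower bound for the denominator
  have hglow : ∀ v : Fin n → ℝ, 0 ≤ bR M v v →
      d * ‖v‖ ≤ ‖bC M Ω (toC v)‖ := by
    intro v hv
    by_cases hv0 : v = 0
    · rw [hv0]; simp [BoundAux.toC_zero, BoundAux.bC_zero_right]
    · have hnv : (0:ℝ) < ‖v‖ := norm_pos_iff.mpr hv0
      have hmem : ‖v‖⁻¹ • v ∈ K := by
        constructor
        · rw [mem_sphere_zero_iff_norm, norm_smul, Real.norm_eq_abs,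
            abs_of_nonneg (by positivity)]
          field_simp
        · show 0 ≤ bR M (‖v‖⁻¹ • v) (‖v‖⁻¹ • v)
          have : bR M (‖v‖⁻¹ • v) (‖v‖⁻¹ • v) = ‖v‖⁻¹ * (‖v‖⁻¹ * bR M v v) := by
            rw [BoundAux.bR_smul_left, BoundAux.bR_smul_right]
          rw [this]
          positivity
      have h2 : d ≤ ‖bC M Ω (toC (‖v‖⁻¹ • v))‖ := hv0min hmem
      rw [BoundAux.bC_smul_right, norm_mul, Complex.norm_real, Real.norm_eq_abs,
        abs_of_nonneg (by positivity)] at h2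
      calc d * ‖v‖ ≤ (‖v‖⁻¹ * ‖bC M Ω (toC v)‖) * ‖v‖ :=
            mul_le_mul_of_nonneg_right h2 (norm_nonneg v)
        _ = ‖bC M Ω (toC v)‖ := by field_simp
  -- upper bound for the numerator
  set CM : ℝ := (∑ i, ∑ j, |(M i j : ℝ)|) + 1 with hCM
  have hCMpos : 0 < CM := by positivity
  have hnum : ∀ (u : Fin n → ℂ) (v : Fin n → ℝ),
      ‖bC M u (toC v)‖ ≤ CM * ‖u‖ * ‖v‖ := by
    intro u v
    have hterm : ∀ i j, ‖(M i j : ℂ) * u i * ((v j : ℝ) : ℂ)‖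
        ≤ |(M i j : ℝ)| * ‖u‖ * ‖v‖ := by
      intro i j
      rw [norm_mul, norm_mul]
      have h1 : ‖u i‖ ≤ ‖u‖ := by
        exact norm_le_pi_norm u i
      have h2 : ‖(v j : ℂ)‖ ≤ ‖v‖ := by
        rw [Complex.norm_real]; exact norm_le_pi_norm v j
      have h3 : ‖(M i j : ℂ)‖ = |(M i j : ℝ)| := by
        rw [← Complex.ofReal_intCast, Complex.norm_real, Real.norm_eq_abs]
      rw [h3]
      gcongr
    calc ‖bC M u (toC v)‖
        ≤ ∑ i, ‖∑ j, (M i j : ℂ) * u i * ((v j : ℝ) : ℂ)‖ :=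
          norm_sum_le _ _
      _ ≤ ∑ i, ∑ j, ‖(M i j : ℂ) * u i * ((v j : ℝ) : ℂ)‖ :=
          Finset.sum_le_sum fun i _ => norm_sum_le _ _
      _ ≤ ∑ i, ∑ j, |(M i j : ℝ)| * ‖u‖ * ‖v‖ :=
          Finset.sum_le_sum fun i _ => Finset.sum_le_sum fun j _ => hterm i j
      _ = (∑ i, ∑ j, |(M i j : ℝ)|) * ‖u‖ * ‖v‖ := by
          simp only [← Finset.sum_mul]
      _ ≤ CM * ‖u‖ * ‖v‖ := by
          have h1 := norm_nonneg u
          have h2 := norm_nonneg v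
          rw [hCM]
          nlinarith
  -- assembly
  refine ⟨CM / (c * d), by positivity, fun u v hv => ?_⟩
  have hcu : c * ‖u‖ ≤ nrm u := hclow u
  have hdv : d * ‖v‖ ≤ ‖bC M Ω (toC v)‖ := hglow v hv
  have h3 : (c * ‖u‖) * (d * ‖v‖) ≤ nrm u * ‖bC M Ω (toC v)‖ :=
    mul_le_mul hcu hdv (by positivity) (apply_nonneg nrm u)
  calc ‖bC M u (toC v)‖ ≤ CM * ‖u‖ * ‖v‖ := hnum u v
    _ = CM / (c * d) * ((c * ‖u‖) * (d * ‖v‖)) := by field_simp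
    _ ≤ CM / (c * d) * (nrm u * ‖bC M Ω (toC v)‖) :=
        mul_le_mul_of_nonneg_left h3 (by positivity)
    _ = CM / (c * d) * nrm u * ‖bC M Ω (toC v)‖ := by ring

end
end
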